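/- arXiv:1401.2792 — 7 statements merged into one kernel-verified Lean document; each statement's English description precedes it below -/
import Mathlib

section
/- For all reals a > 0, b > 0 and all x ∈ [0,1], the scaled-Gamma CDF is dominated by the Beta CDF: (∫_0^x y^{a−1} e^{−by} dy) / (∫_0^∞ y^{a−1} e^{−by} dy) ≤ (∫_0^x y^{a−1} (1−y)^b dy) / (∫_0^1 y^{a−1} (1−y)^b dy). -/
open MeasureTheory Real Set

private lemma key_ratio (b : ℝ) (hb : 0 < b) (y z : ℝ) (hy : 0 ≤ y) (hyz : y ≤ z) (hz : z ≤ 1) :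
    Real.exp (-(b*y)) * (1 - z) ^ b ≤ (1 - y) ^ b * Real.exp (-(b*z)) := by
  have h1 : (1 - z) ≤ (1 - y) * Real.exp (y - z) := by
    nlinarith [Real.add_one_le_exp (y - z), Real.exp_pos (y - z)]
  have h2 : (1 - z) ^ b ≤ ((1 - y) * Real.exp (y - z)) ^ b :=
    Real.rpow_le_rpow (by linarith) h1 hb.le
  have h3 : ((1 - y) * Real.exp (y - z)) ^ b = (1 - y) ^ b * Real.exp (b * (y - z)) := by
    rw [Real.mul_rpow (by linarith) (Real.exp_pos _).le, ← Real.exp_log (Real.exp_pos (y-z)),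
      ← Real.exp_mul, Real.log_exp]
    ring_nf
  calc Real.exp (-(b*y)) * (1 - z) ^ b
      ≤ Real.exp (-(b*y)) * ((1 - y) ^ b * Real.exp (b*(y-z))) := by
        rw [← h3]; exact mul_le_mul_of_nonneg_left h2 (Real.exp_pos _).le
    _ = (1 - y) ^ b * Real.exp (-(b*z)) := by
        rw [show -(b*z) = -(b*y) + b*(y-z) by ring, Real.exp_add]; ring


/-- For all reals `a > 0`, `b > 0` and all `x ∈ [0,1]`, the scaled-Gamma CDF is
dominated by the Beta CDF:
`(∫_0^x y^(a-1) e^(-by) dy) / (∫_0^∞ y^(a-1) e^(-by) dy)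
  ≤ (∫_0^x y^(a-1) (1-y)^b dy) / (∫_0^1 y^(a-1) (1-y)^b dy)`. -/
theorem gamma_cdf_le_beta_cdf (a b : ℝ) (ha : 0 < a) (hb : 0 < b)
    (x : ℝ) (hx : x ∈ Set.Icc (0:ℝ) 1) :
    (∫ y in Set.Ioc (0:ℝ) x, y ^ (a - 1) * Real.exp (-(b * y))) /
        (∫ y in Set.Ioi (0:ℝ), y ^ (a - 1) * Real.exp (-(b * y))) ≤
      (∫ y in Set.Ioc (0:ℝ) x, y ^ (a - 1) * (1 - y) ^ b) /
        (∫ y in Set.Ioc (0:ℝ) 1, y ^ (a - 1) * (1 - y) ^ b) := by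
  obtain ⟨hx0, hx1⟩ := hx
  set g : ℝ → ℝ := fun y => y ^ (a - 1) * Real.exp (-(b * y)) with hg_def
  set h : ℝ → ℝ := fun y => y ^ (a - 1) * (1 - y) ^ b with hh_def
  have ha1 : (-1:ℝ) < a - 1 := by linarith
  -- integrability of g on Ioi 0
  have hg_int : IntegrableOn g (Ioi 0) := by
    have := integrableOn_rpow_mul_exp_neg_mul_rpow ha1 (zero_lt_one : (0:ℝ) < 1) hb
    refine this.congr_fun (fun y hy => ?_) measurableSet_Ioi
    simp [Real.rpow_one, neg_mul, hg_def]
  -- integrability of h on Ioc 0 1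
  have hh_meas : Measurable h := by unfold h; fun_prop
  have hmaj : IntegrableOn (fun y : ℝ => y ^ (a-1)) (Ioc 0 1) := by
    rw [← intervalIntegrable_iff_integrableOn_Ioc_of_le zero_le_one]
    exact intervalIntegral.intervalIntegrable_rpow' ha1
  have hh_int : IntegrableOn h (Ioc 0 1) := by
    refine Integrable.mono hmaj hh_meas.aestronglyMeasurable ?_
    filter_upwards [ae_restrict_mem measurableSet_Ioc] with y hy
    have h1 : (0:ℝ) ≤ y ^ (a-1) := Real.rpow_nonneg hy.1.le _
    have h2 : (1 - y) ^ b ≤ 1 := Real.rpow_le_one (by linarith [hy.2]) (by linarith [hy.1]) hb.le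
    have h3 : (0:ℝ) ≤ (1 - y) ^ b := Real.rpow_nonneg (by linarith [hy.2]) _
    rw [Real.norm_eq_abs, Real.norm_eq_abs, abs_of_nonneg (mul_nonneg h1 h3), abs_of_nonneg h1]
    nlinarith
  -- nonnegativity
  have hg_nn : ∀ y ∈ Ioi (0:ℝ), 0 ≤ g y := fun y hy =>
    mul_nonneg (Real.rpow_nonneg (le_of_lt hy) _) (Real.exp_pos _).le
  have hh_nn : ∀ y ∈ Ioc (0:ℝ) 1, 0 ≤ h y := fun y hy =>
    mul_nonneg (Real.rpow_nonneg hy.1.le _) (Real.rpow_nonneg (by linarith [hy.2]) _)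
  -- set pieces
  have hsub1 : Ioc (0:ℝ) x ⊆ Ioi 0 := Ioc_subset_Ioi_self
  have hsub2 : Ioc (0:ℝ) x ⊆ Ioc 0 1 := Ioc_subset_Ioc_right hx1
  have hsub3 : Ioc x 1 ⊆ Ioc (0:ℝ) 1 := Ioc_subset_Ioc_left hx0
  have hsub4 : Ioc x (1:ℝ) ⊆ Ioi x := Ioc_subset_Ioi_self
  have hsub5 : Ioi x ⊆ Ioi (0:ℝ) := Ioi_subset_Ioi hx0
  set G := ∫ y in Ioc (0:ℝ) x, g y with hG_def
  set B := ∫ y in Ioc (0:ℝ) x, h y with hB_def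
  set D := ∫ y in Ioi x, g y with hD_def
  set D1 := ∫ y in Ioc x 1, g y with hD1_def
  set C := ∫ y in Ioc x 1, h y with hC_def
  have hG_nn : 0 ≤ G := setIntegral_nonneg measurableSet_Ioc (fun y hy => hg_nn y (hsub1 hy))
  have hB_nn : 0 ≤ B := setIntegral_nonneg measurableSet_Ioc (fun y hy => hh_nn y (hsub2 hy))
  have hC_nn : 0 ≤ C := setIntegral_nonneg measurableSet_Ioc (fun y hy => hh_nn y (hsub3 hy))
  have hD1_nn : 0 ≤ D1 := setIntegral_nonneg measurableSet_Ioc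
    (fun y hy => hg_nn y (hsub5 (hsub4 hy)))
  -- denominators positive
  have hIg_pos : 0 < ∫ y in Ioi (0:ℝ), g y := by
    rw [setIntegral_pos_iff_support_of_nonneg_ae ?_ hg_int]
    · refine lt_of_lt_of_le ?_ (measure_mono (?_ : Ioo (0:ℝ) 1 ⊆ _))
      · simp [Real.volume_Ioo]
      · intro y hy
        refine ⟨?_, hy.1⟩
        have : 0 < g y := mul_pos (Real.rpow_pos_of_pos hy.1 _) (Real.exp_pos _)
        exact Function.mem_support.2 this.ne'
    · filter_upwards [ae_restrict_mem measurableSet_Ioi] with y hy using hg_nn y hy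
  have hBd_pos : 0 < ∫ y in Ioc (0:ℝ) 1, h y := by
    rw [setIntegral_pos_iff_support_of_nonneg_ae ?_ hh_int]
    · refine lt_of_lt_of_le ?_ (measure_mono (?_ : Ioo (0:ℝ) 1 ⊆ _))
      · simp [Real.volume_Ioo]
      · intro y hy
        refine ⟨?_, hy.1, hy.2.le⟩
        have : 0 < h y := mul_pos (Real.rpow_pos_of_pos hy.1 _)
          (Real.rpow_pos_of_pos (by linarith [hy.2]) _)
        exact Function.mem_support.2 this.ne'
    · filter_upwards [ae_restrict_mem measurableSet_Ioc] with y hy using hh_nn y hy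
  rw [div_le_div_iff₀ hIg_pos hBd_pos]
  -- decompose
  have hdec1 : (∫ y in Ioi (0:ℝ), g y) = G + D := by
    rw [← Ioc_union_Ioi_eq_Ioi hx0,
      setIntegral_union (Ioc_disjoint_Ioi le_rfl) measurableSet_Ioi
        (hg_int.mono_set hsub1) (hg_int.mono_set hsub5)]
  have hdec2 : (∫ y in Ioc (0:ℝ) 1, h y) = B + C := by
    rw [← Ioc_union_Ioc_eq_Ioc hx0 hx1,
      setIntegral_union ((Ioc_disjoint_Ioi le_rfl).mono_right hsub4) measurableSet_Ioc
        (hh_int.mono_set hsub2) (hh_int.mono_set hsub3)]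
  rw [hdec1, hdec2]
  -- reduce to G*C ≤ B*D
  have hD1D : D1 ≤ D := by
    apply setIntegral_mono_set (hg_int.mono_set hsub5) ?_ hsub4.eventuallyLE
    filter_upwards [ae_restrict_mem measurableSet_Ioi] with y hy using hg_nn y (hsub5 hy)
  suffices hmain : G * C ≤ B * D1 by nlinarith
  by_cases hx1' : x = 1
  · have : C = 0 := by simp [hC_def, hx1']
    rw [this, mul_zero]
    exact mul_nonneg hB_nn hD1_nn
  · have hxlt : x < 1 := lt_of_le_of_ne hx1 hx1'
    set s := (1 - x) ^ b with hs_def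
    set t := Real.exp (-(b * x)) with ht_def
    have hs_pos : 0 < s := Real.rpow_pos_of_pos (by linarith) _
    have ht_pos : 0 < t := Real.exp_pos _
    have h1 : s * G ≤ t * B := by
      rw [← integral_const_mul, ← integral_const_mul]
      apply setIntegral_mono_on ((hg_int.mono_set hsub1).const_mul s)
        ((hh_int.mono_set hsub2).const_mul t) measurableSet_Ioc
      intro y hy
      have hk := key_ratio b hb y x hy.1.le hy.2 hx1
      have hf : (0:ℝ) ≤ y ^ (a - 1) := Real.rpow_nonneg hy.1.le _
      simp only [hg_def, hh_def, hs_def, ht_def]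
      nlinarith [mul_le_mul_of_nonneg_left hk hf]
    have h2 : t * C ≤ s * D1 := by
      rw [← integral_const_mul, ← integral_const_mul]
      apply setIntegral_mono_on ((hh_int.mono_set hsub3).const_mul t)
        (((hg_int.mono_set hsub5).mono_set hsub4).const_mul s) measurableSet_Ioc
      intro z hz
      have hk := key_ratio b hb x z hx0 hz.1.le hz.2
      have hf : (0:ℝ) ≤ z ^ (a - 1) := Real.rpow_nonneg (hx0.trans hz.1.le) _
      simp only [hg_def, hh_def, hs_def, ht_def]
      nlinarith [mul_le_mul_of_nonneg_left hk hf]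
    have hcomb : (s * G) * (t * C) ≤ (t * B) * (s * D1) :=
      mul_le_mul h1 h2 (mul_nonneg ht_pos.le hC_nn) (mul_nonneg ht_pos.le hB_nn)
    have : (s * t) * (G * C) ≤ (s * t) * (B * D1) := by nlinarith
    exact le_of_mul_le_mul_left this (mul_pos hs_pos ht_pos)
end

section
/- For all integers 2 ≤ k ≤ ℓ, the expectation E[φ_k^{(ℓ)}] = E[ψ_k] · ∏_{i=k+1}^{ℓ} (1 − E[ψ_i]) of φ_k^{(ℓ)} = ψ_k ∏_{i=k+1}^{ℓ}(1−ψ_i) satisfies the two-sided bound (χ/k)·((k−1)/(ℓ−1))^χ ≤ E[φ_k^{(ℓ)}] ≤ (χ/(k−1))·((k+1)/(ℓ+1))^χ. -/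
open MeasureTheory ProbabilityTheory Real

/-- The Beta(p,q) measure on ℝ: density `x^(p-1)(1-x)^(q-1)/B(p,q)` on `(0,1)`. -/
noncomputable def betaMeasure (p q : ℝ) : Measure ℝ :=
  MeasureTheory.volume.withDensity fun x => ENNReal.ofReal
    ((Set.Ioo (0:ℝ) 1).indicator
      (fun t => t ^ (p - 1) * (1 - t) ^ (q - 1) /
        ∫ s in Set.Ioo (0:ℝ) 1, s ^ (p - 1) * (1 - s) ^ (q - 1)) x)


section AuxPhiBounds
open Set
open scoped NNReal ENNReal

lemma cB_eq {p q : ℝ} (hp : 0 < p) (hq : 0 < q) :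
    ((∫ x in Set.Ioo (0:ℝ) 1, x ^ (p - 1) * (1 - x) ^ (q - 1) : ℝ) : ℂ) =
      Complex.betaIntegral p q := by
  have h1 : Complex.betaIntegral p q
      = ∫ x in Ioc (0:ℝ) 1, ((x ^ (p - 1) * (1 - x) ^ (q - 1) : ℝ) : ℂ) := by
    rw [Complex.betaIntegral, intervalIntegral.integral_of_le zero_le_one]
    refine setIntegral_congr_ae measurableSet_Ioc (Filter.Eventually.of_forall fun x hx => ?_)
    have hx0 : (0:ℝ) ≤ x := hx.1.le
    have hx1 : (0:ℝ) ≤ 1 - x := by rcases hx with ⟨h1, h2⟩; linarith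
    rw [Complex.ofReal_mul, Complex.ofReal_cpow hx0, Complex.ofReal_cpow hx1]
    push_cast
    ring
  have h2 : (∫ x in Ioc (0:ℝ) 1, ((x ^ (p - 1) * (1 - x) ^ (q - 1) : ℝ) : ℂ))
      = ((∫ x in Ioc (0:ℝ) 1, x ^ (p - 1) * (1 - x) ^ (q - 1) : ℝ) : ℂ) := integral_ofReal
  rw [h1, h2, MeasureTheory.integral_Ioc_eq_integral_Ioo]

lemma B_eq_Gamma {p q : ℝ} (hp : 0 < p) (hq : 0 < q) :
    (∫ x in Set.Ioo (0:ℝ) 1, x ^ (p - 1) * (1 - x) ^ (q - 1)) =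
      Real.Gamma p * Real.Gamma q / Real.Gamma (p + q) := by
  have hpq : (0:ℝ) < p + q := by linarith
  have hG : Real.Gamma (p + q) ≠ 0 := (Real.Gamma_pos_of_pos hpq).ne'
  have h := Complex.Gamma_mul_Gamma_eq_betaIntegral (s := (p:ℂ)) (t := (q:ℂ))
    (by simpa using hp) (by simpa using hq)
  rw [← cB_eq hp hq] at h
  have : ((Real.Gamma p * Real.Gamma q : ℝ) : ℂ) =
      ((Real.Gamma (p+q) * ∫ x in Set.Ioo (0:ℝ) 1, x ^ (p - 1) * (1 - x) ^ (q - 1) : ℝ) : ℂ) := by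
    push_cast
    rw [Complex.Gamma_ofReal, Complex.Gamma_ofReal, ← Complex.ofReal_add, Complex.Gamma_ofReal] at h
    push_cast at h
    exact h
  have h2 := Complex.ofReal_inj.mp this
  field_simp
  linarith [h2]

lemma B_pos {p q : ℝ} (hp : 0 < p) (hq : 0 < q) :
    0 < ∫ x in Set.Ioo (0:ℝ) 1, x ^ (p - 1) * (1 - x) ^ (q - 1) := by
  rw [B_eq_Gamma hp hq]
  have := Real.Gamma_pos_of_pos hp
  have := Real.Gamma_pos_of_pos hq
  have := Real.Gamma_pos_of_pos (show (0:ℝ) < p + q by linarith)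
  positivity

lemma B_integrable {p q : ℝ} (hp : 0 < p) (hq : 0 < q) :
    IntegrableOn (fun x : ℝ => x ^ (p - 1) * (1 - x) ^ (q - 1)) (Set.Ioo 0 1) := by
  have h := Complex.betaIntegral_convergent (u := (p:ℂ)) (v := (q:ℂ))
    (by simpa using hp) (by simpa using hq)
  have h2 : IntegrableOn (fun x : ℝ => (x:ℂ) ^ ((p:ℂ) - 1) * (1 - (x:ℂ)) ^ ((q:ℂ) - 1))
      (Set.Ioo 0 1) := by
    simpa [IntegrableOn] using (h.1).mono_set Set.Ioo_subset_Ioc_self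
  have h3 : IntegrableOn (fun x : ℝ => (((x:ℂ) ^ ((p:ℂ) - 1) * (1 - (x:ℂ)) ^ ((q:ℂ) - 1)).re))
      (Set.Ioo 0 1) := h2.re
  refine MeasureTheory.IntegrableOn.congr_fun h3 (fun x hx => ?_) measurableSet_Ioo
  have hx0 : (0:ℝ) ≤ x := hx.1.le
  have hx1 : (0:ℝ) ≤ 1 - x := by rcases hx with ⟨a, b⟩; linarith
  rw [show ((p:ℂ) - 1) = ((p - 1 : ℝ) : ℂ) by push_cast; ring,
    show ((q:ℂ) - 1) = ((q - 1 : ℝ) : ℂ) by push_cast; ring,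
    show ((1:ℂ) - (x:ℂ)) = ((1 - x : ℝ) : ℂ) by push_cast; ring,
    ← Complex.ofReal_cpow hx0, ← Complex.ofReal_cpow hx1, ← Complex.ofReal_mul,
    Complex.ofReal_re]

lemma B_moment {p q : ℝ} (hp : 0 < p) (hq : 0 < q) :
    (∫ x in Set.Ioo (0:ℝ) 1, x ^ (p + 1 - 1) * (1 - x) ^ (q - 1)) =
      p / (p + q) * ∫ x in Set.Ioo (0:ℝ) 1, x ^ (p - 1) * (1 - x) ^ (q - 1) := by
  rw [B_eq_Gamma (by linarith) hq, B_eq_Gamma hp hq]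
  have h1 : Real.Gamma (p + 1) = p * Real.Gamma p := Real.Gamma_add_one hp.ne'
  have h2 : Real.Gamma (p + 1 + q) = (p + q) * Real.Gamma (p + q) := by
    rw [show p + 1 + q = (p + q) + 1 by ring, Real.Gamma_add_one (by positivity)]
  rw [h1, h2]
  have g1 := Real.Gamma_pos_of_pos hp
  have g2 := Real.Gamma_pos_of_pos hq
  have g3 := Real.Gamma_pos_of_pos (show (0:ℝ) < p + q by linarith)
  field_simp

lemma betaMeasure_compl (p q : ℝ) : _root_.betaMeasure p q (Set.Ioo (0:ℝ) 1)ᶜ = 0 := by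
  rw [_root_.betaMeasure, withDensity_apply _ measurableSet_Ioo.compl]
  rw [setLIntegral_congr_fun measurableSet_Ioo.compl
    (fun ⦃x⦄ hx => ?_), lintegral_zero]
  simp [Set.indicator_of_notMem hx]

lemma betaMeasure_integral_id {p q : ℝ} (hp : 0 < p) (hq : 0 < q) :
    ∫ x, x ∂(_root_.betaMeasure p q) = p / (p + q) := by
  set Z := ∫ s in Set.Ioo (0:ℝ) 1, s ^ (p - 1) * (1 - s) ^ (q - 1) with hZdef
  have hZ : 0 < Z := B_pos hp hq
  set f : ℝ → ℝ := (Set.Ioo (0:ℝ) 1).indicator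
    (fun t => t ^ (p - 1) * (1 - t) ^ (q - 1) / Z) with hfdef
  have hfmeas : Measurable f := by
    apply Measurable.indicator _ measurableSet_Ioo
    fun_prop
  have hfnn : ∀ x, 0 ≤ f x := by
    intro x
    apply Set.indicator_nonneg
    intro t ht
    have h0 : (0:ℝ) ≤ t := ht.1.le
    have h1 : (0:ℝ) ≤ 1 - t := by rcases ht with ⟨a, b⟩; linarith
    positivity
  have hbm : _root_.betaMeasure p q = volume.withDensity fun x => ((Real.toNNReal (f x) : ℝ≥0) : ℝ≥0∞) :=
    rfl
  rw [hbm, integral_withDensity_eq_integral_smul (show Measurable fun x => (f x).toNNReal from measurable_real_toNNReal.comp hfmeas)]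
  have h1 : (fun x : ℝ => Real.toNNReal (f x) • x)
      = (Set.Ioo (0:ℝ) 1).indicator (fun t => t ^ (p - 1) * (1 - t) ^ (q - 1) / Z * t) := by
    funext x
    by_cases hx : x ∈ Set.Ioo (0:ℝ) 1
    · have h0 : (0:ℝ) ≤ x := hx.1.le
      have h1' : (0:ℝ) ≤ 1 - x := by rcases hx with ⟨a, b⟩; linarith
      simp [NNReal.smul_def, Real.coe_toNNReal _ (hfnn x), hfdef, Set.indicator_of_mem hx]
      exact Or.inl (by positivity)
    · simp [NNReal.smul_def, Real.coe_toNNReal _ (hfnn x), hfdef, Set.indicator_of_notMem hx]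
  rw [h1, integral_indicator measurableSet_Ioo]
  have h2 : ∀ x ∈ Set.Ioo (0:ℝ) 1,
      x ^ (p - 1) * (1 - x) ^ (q - 1) / Z * x = x ^ (p + 1 - 1) * (1 - x) ^ (q - 1) / Z := by
    intro x hx
    have hx0 : x ≠ 0 := hx.1.ne'
    have : x ^ (p + 1 - 1) = x ^ (p - 1) * x := by
      rw [show p + 1 - 1 = (p - 1) + 1 by ring, Real.rpow_add_one hx0]
    rw [this]; ring
  rw [setIntegral_congr_fun measurableSet_Ioo h2, integral_div, B_moment hp hq, ← hZdef]
  field_simp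

lemma factor_lower {a χ : ℝ} (ha : 1 ≤ a) (hχ : 1/2 ≤ χ) (hχ1 : χ < 1) :
    (a / (a + 1)) ^ χ ≤ (a + χ) / (a + 2*χ) := by
  have hχ0 : 0 < χ := by linarith
  have hd : (0:ℝ) < a + 2*χ := by linarith
  have hn : (0:ℝ) < a + χ := by linarith
  have key : a / (a + 1) ≤ ((a + χ) / (a + 2*χ)) ^ χ⁻¹ := by
    have hs : (-1:ℝ) ≤ -(χ / (a + 2*χ)) := by
      rw [neg_le_neg_iff, div_le_one hd]; linarith
    have hp : (1:ℝ) ≤ χ⁻¹ := by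
      rw [le_inv_comm₀ one_pos hχ0]; simpa using hχ1.le
    have hb := one_add_mul_self_le_rpow_one_add hs hp
    have e1 : (1:ℝ) + -(χ / (a + 2*χ)) = (a + χ) / (a + 2*χ) := by field_simp; ring
    have e2 : (1:ℝ) + χ⁻¹ * -(χ / (a + 2*χ)) = (a + 2*χ - 1) / (a + 2*χ) := by
      field_simp; ring
    rw [e1, e2] at hb
    refine le_trans ?_ hb
    rw [div_le_div_iff₀ (by linarith) hd]
    nlinarith
  calc (a / (a + 1)) ^ χ ≤ (((a + χ) / (a + 2*χ)) ^ χ⁻¹) ^ χ :=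
        Real.rpow_le_rpow (by positivity) key hχ0.le
    _ = (a + χ) / (a + 2*χ) := by
        rw [← Real.rpow_mul (le_of_lt (div_pos hn hd)), inv_mul_cancel₀ hχ0.ne', Real.rpow_one]

lemma factor_upper {a χ : ℝ} (ha : 1 ≤ a) (hχ : 1/2 ≤ χ) (hχ1 : χ < 1) :
    (a + χ) / (a + 2*χ) ≤ ((a + 2) / (a + 3)) ^ χ := by
  have hχ0 : 0 < χ := by linarith
  have hd : (0:ℝ) < a + 2*χ := by linarith
  have hn : (0:ℝ) < a + χ := by linarith
  have key : (a + 3) / (a + 2) ≤ ((a + 2*χ) / (a + χ)) ^ χ⁻¹ := by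
    have hs : (-1:ℝ) ≤ χ / (a + χ) := le_trans (by norm_num) (by positivity : (0:ℝ) ≤ χ / (a + χ))
    have hp : (1:ℝ) ≤ χ⁻¹ := by
      rw [le_inv_comm₀ one_pos hχ0]; simpa using hχ1.le
    have hb := one_add_mul_self_le_rpow_one_add hs hp
    have e1 : (1:ℝ) + χ / (a + χ) = (a + 2*χ) / (a + χ) := by field_simp; ring
    have e2 : (1:ℝ) + χ⁻¹ * (χ / (a + χ)) = (a + χ + 1) / (a + χ) := by
      field_simp
    rw [e1, e2] at hb
    refine le_trans ?_ hb
    rw [div_le_div_iff₀ (by linarith) hn]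
    nlinarith
  have key2 : ((a + 3) / (a + 2)) ^ χ ≤ (a + 2*χ) / (a + χ) := by
    calc ((a + 3) / (a + 2)) ^ χ ≤ (((a + 2*χ) / (a + χ)) ^ χ⁻¹) ^ χ :=
          Real.rpow_le_rpow (by positivity) key hχ0.le
      _ = (a + 2*χ) / (a + χ) := by
          rw [← Real.rpow_mul (le_of_lt (div_pos hd hn)), inv_mul_cancel₀ hχ0.ne', Real.rpow_one]
  have h1 : (0:ℝ) < ((a + 3) / (a + 2)) ^ χ := Real.rpow_pos_of_pos (by positivity) χ
  rw [show (a + 2) / (a + 3) = ((a + 3) / (a + 2))⁻¹ by rw [inv_div],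
    Real.inv_rpow (by positivity)]
  rw [le_inv_comm₀ (div_pos hn hd) h1, inv_div]
  exact key2

lemma prod_bounds {χ : ℝ} (hχ : 1/2 ≤ χ) (hχ1 : χ < 1) {k ℓ : ℕ} (hk : 2 ≤ k) (hkl : k ≤ ℓ) :
    (χ / k) * (((k:ℝ) - 1) / ((ℓ:ℝ) - 1)) ^ χ ≤
      χ / ((k:ℝ) - 2 + 2*χ) * ∏ i ∈ Finset.Icc (k+1) ℓ, (((i:ℝ) - 2 + χ) / ((i:ℝ) - 2 + 2*χ)) ∧
    χ / ((k:ℝ) - 2 + 2*χ) * ∏ i ∈ Finset.Icc (k+1) ℓ, (((i:ℝ) - 2 + χ) / ((i:ℝ) - 2 + 2*χ)) ≤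
      (χ / ((k:ℝ) - 1)) * (((k:ℝ) + 1) / ((ℓ:ℝ) + 1)) ^ χ := by
  have hχ0 : (0:ℝ) < χ := by linarith
  have hk2 : (2:ℝ) ≤ (k:ℝ) := by exact_mod_cast hk
  have hkd : (0:ℝ) < (k:ℝ) - 2 + 2*χ := by linarith
  induction ℓ, hkl using Nat.le_induction with
  | base =>
    rw [Finset.Icc_eq_empty (by omega), Finset.prod_empty, mul_one]
    constructor
    · rw [div_self (by linarith : (k:ℝ) - 1 ≠ 0), Real.one_rpow, mul_one]
      gcongr <;> linarith
    · rw [div_self (by linarith : (k:ℝ) + 1 ≠ 0), Real.one_rpow, mul_one]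
      gcongr <;> linarith
  | succ n hn ih =>
    have hn2 : (2:ℝ) ≤ (n:ℝ) := le_trans hk2 (by exact_mod_cast hn)
    have ha : (1:ℝ) ≤ (n:ℝ) - 1 := by linarith
    have hprodpos : 0 < ∏ i ∈ Finset.Icc (k+1) n, (((i:ℝ) - 2 + χ) / ((i:ℝ) - 2 + 2*χ)) := by
      apply Finset.prod_pos
      intro i hi
      have : k + 1 ≤ i := (Finset.mem_Icc.mp hi).1
      have hi3 : (3:ℝ) ≤ (i:ℝ) := by
        have : 3 ≤ i := by omega
        exact_mod_cast this
      apply div_pos <;> linarith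
    rw [← Finset.insert_Icc_right_eq_Icc_add_one (by omega), Finset.prod_insert (by simp)]
    have hgl := factor_lower (a := (n:ℝ) - 1) ha hχ hχ1
    have hgu := factor_upper (a := (n:ℝ) - 1) ha hχ hχ1
    have hg : ((n:ℝ) + 1 - 2 + χ) / ((n:ℝ) + 1 - 2 + 2*χ) = ((n:ℝ) - 1 + χ) / ((n:ℝ) - 1 + 2*χ) := by
      ring_nf
    have hgpos : 0 < ((n:ℝ) - 1 + χ) / ((n:ℝ) - 1 + 2*χ) := by
      apply div_pos <;> linarith
    constructor
    · -- lower bound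
      have hsplit : (((k:ℝ) - 1) / ((n:ℝ) + 1 - 1)) ^ χ
          = (((k:ℝ) - 1) / ((n:ℝ) - 1)) ^ χ * (((n:ℝ) - 1) / (n:ℝ)) ^ χ := by
        have hbase : ((k:ℝ) - 1) / ((n:ℝ) + 1 - 1) = (((k:ℝ) - 1) / ((n:ℝ) - 1)) * (((n:ℝ) - 1) / (n:ℝ)) := by
          have h1 : (n:ℝ) - 1 ≠ 0 := by linarith
          rw [div_mul_div_comm, mul_comm ((k:ℝ) - 1) ((n:ℝ) - 1), mul_div_mul_left _ _ h1]
          ring_nf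
        rw [hbase, Real.mul_rpow (div_nonneg (by linarith) (by linarith))
          (div_nonneg (by linarith) (by linarith))]
      push_cast
      rw [hsplit, hg]
      calc χ / (k:ℝ) * ((((k:ℝ) - 1) / ((n:ℝ) - 1)) ^ χ * (((n:ℝ) - 1) / (n:ℝ)) ^ χ)
          = (χ / (k:ℝ) * (((k:ℝ) - 1) / ((n:ℝ) - 1)) ^ χ) * (((n:ℝ) - 1) / (n:ℝ)) ^ χ := by ring
        _ ≤ (χ / ((k:ℝ) - 2 + 2*χ) * ∏ i ∈ Finset.Icc (k+1) n,
              (((i:ℝ) - 2 + χ) / ((i:ℝ) - 2 + 2*χ))) * (((n:ℝ) - 1) / (n:ℝ)) ^ χ := by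
            apply mul_le_mul_of_nonneg_right ih.1 (Real.rpow_nonneg (by positivity) χ)
        _ ≤ (χ / ((k:ℝ) - 2 + 2*χ) * ∏ i ∈ Finset.Icc (k+1) n,
              (((i:ℝ) - 2 + χ) / ((i:ℝ) - 2 + 2*χ))) * (((n:ℝ) - 1 + χ) / ((n:ℝ) - 1 + 2*χ)) := by
            apply mul_le_mul_of_nonneg_left _ (by positivity)
            have : ((n:ℝ) - 1) / ((n:ℝ) - 1 + 1) = ((n:ℝ) - 1) / (n:ℝ) := by ring_nf
            rw [← this]
            exact hgl
        _ = χ / ((k:ℝ) - 2 + 2*χ) * (((n:ℝ) - 1 + χ) / ((n:ℝ) - 1 + 2*χ) *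
              ∏ i ∈ Finset.Icc (k+1) n, (((i:ℝ) - 2 + χ) / ((i:ℝ) - 2 + 2*χ))) := by ring
    · -- upper bound
      have hsplit : (((k:ℝ) + 1) / ((n:ℝ) + 1 + 1)) ^ χ
          = (((k:ℝ) + 1) / ((n:ℝ) + 1)) ^ χ * (((n:ℝ) + 1) / ((n:ℝ) + 2)) ^ χ := by
        have hbase : ((k:ℝ) + 1) / ((n:ℝ) + 1 + 1) = (((k:ℝ) + 1) / ((n:ℝ) + 1)) * (((n:ℝ) + 1) / ((n:ℝ) + 2)) := by
          have h1 : (n:ℝ) + 1 ≠ 0 := by linarith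
          rw [div_mul_div_comm, mul_comm ((k:ℝ) + 1) ((n:ℝ) + 1), mul_div_mul_left _ _ h1]
          ring_nf
        rw [hbase, Real.mul_rpow (div_nonneg (by linarith) (by linarith))
          (div_nonneg (by linarith) (by linarith))]
      push_cast
      rw [hsplit, hg]
      calc χ / ((k:ℝ) - 2 + 2*χ) * (((n:ℝ) - 1 + χ) / ((n:ℝ) - 1 + 2*χ) *
              ∏ i ∈ Finset.Icc (k+1) n, (((i:ℝ) - 2 + χ) / ((i:ℝ) - 2 + 2*χ)))
          = (χ / ((k:ℝ) - 2 + 2*χ) * ∏ i ∈ Finset.Icc (k+1) n,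
              (((i:ℝ) - 2 + χ) / ((i:ℝ) - 2 + 2*χ))) * (((n:ℝ) - 1 + χ) / ((n:ℝ) - 1 + 2*χ)) := by
            ring
        _ ≤ (χ / ((k:ℝ) - 2 + 2*χ) * ∏ i ∈ Finset.Icc (k+1) n,
              (((i:ℝ) - 2 + χ) / ((i:ℝ) - 2 + 2*χ))) * (((n:ℝ) + 1) / ((n:ℝ) + 2)) ^ χ := by
            apply mul_le_mul_of_nonneg_left _ (by positivity)
            have : ((n:ℝ) - 1 + 2) / ((n:ℝ) - 1 + 3) = ((n:ℝ) + 1) / ((n:ℝ) + 2) := by ring_nf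
            rw [← this]
            exact hgu
        _ ≤ ((χ / ((k:ℝ) - 1)) * (((k:ℝ) + 1) / ((n:ℝ) + 1)) ^ χ) * (((n:ℝ) + 1) / ((n:ℝ) + 2)) ^ χ := by
            apply mul_le_mul_of_nonneg_right ih.2 (Real.rpow_nonneg (by positivity) χ)
        _ = χ / ((k:ℝ) - 1) * ((((k:ℝ) + 1) / ((n:ℝ) + 1)) ^ χ * (((n:ℝ) + 1) / ((n:ℝ) + 2)) ^ χ) := by
            ring

open ProbabilityTheory in
lemma integral_finset_prod_of_iIndepFun {Ω : Type*} [MeasurableSpace Ω] {μ : Measure Ω}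
    [IsProbabilityMeasure μ] {F : ℕ → Ω → ℝ} (hFmeas : ∀ i, Measurable (F i))
    (hF : iIndepFun F μ) (s : Finset ℕ) :
    ∫ ω, ∏ i ∈ s, F i ω ∂μ = ∏ i ∈ s, ∫ ω, F i ω ∂μ := by
  classical
  induction s using Finset.induction_on with
  | empty => simp
  | @insert a s ha ih =>
    rw [Finset.prod_insert ha]
    have hind := (hF.indepFun_finset_prod_of_notMem hFmeas ha).symm
    have hmY : Measurable (∏ j ∈ s, F j) := by
      rw [show (∏ j ∈ s, F j) = fun ω => ∏ j ∈ s, F j ω from funext fun ω => by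
        simp [Finset.prod_apply]]
      exact s.measurable_prod (fun i _ => hFmeas i)
    have h1 := hind.integral_mul_eq_mul_integral (hFmeas a).aestronglyMeasurable hmY.aestronglyMeasurable
    rw [show (∏ j ∈ s, F j) = (fun ω => ∏ j ∈ s, F j ω) from funext fun ω => by simp] at h1
    simp only [Finset.prod_apply] at h1
    calc ∫ ω, ∏ i ∈ insert a s, F i ω ∂μ
        = ∫ ω, F a ω * ∏ i ∈ s, F i ω ∂μ := by
          congr 1
          funext ω
          exact Finset.prod_insert ha
      _ = (∫ ω, F a ω ∂μ) * ∫ ω, ∏ i ∈ s, F i ω ∂μ := h1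
      _ = (∫ ω, F a ω ∂μ) * ∏ i ∈ s, ∫ ω, F i ω ∂μ := by rw [ih]

end AuxPhiBounds

/-- For all integers `2 ≤ k ≤ ℓ`, the expectation
`E[φ_k^(ℓ)] = E[ψ_k] ∏_{i=k+1}^ℓ (1 − E[ψ_i])` of `φ_k^(ℓ) = ψ_k ∏_{i=k+1}^ℓ (1 − ψ_i)`
satisfies `(χ/k)((k-1)/(ℓ-1))^χ ≤ E[φ_k^(ℓ)] ≤ (χ/(k-1))((k+1)/(ℓ+1))^χ`, where the
`ψ_j ~ Beta(m+2mu, (2j-3)m+2mu(j-1))` are independent, `u = α/(1-α)`, `χ = (1+2u)/(2+2u)`. -/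
theorem phi_expectation_bounds {Ω : Type*} [MeasurableSpace Ω] (μ : Measure Ω)
    [IsProbabilityMeasure μ] (m : ℕ) (hm : 2 ≤ m) (α : ℝ) (hα : α ∈ Set.Ico (0:ℝ) 1)
    (u χ : ℝ) (hu : u = α / (1 - α)) (hχ : χ = (1 + 2*u) / (2 + 2*u))
    (ψ : ℕ → Ω → ℝ) (hmeas : ∀ j, Measurable (ψ j))
    (hindep : iIndepFun ψ μ)
    (hdist : ∀ j : ℕ, 2 ≤ j → Measure.map (ψ j) μ =
      _root_.betaMeasure (m + 2*m*u) ((2*(j:ℝ) - 3)*m + 2*m*u*((j:ℝ) - 1)))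
    (k ℓ : ℕ) (hk : 2 ≤ k) (hkℓ : k ≤ ℓ) :
    (∫ ω, ψ k ω * ∏ i ∈ Finset.Icc (k+1) ℓ, (1 - ψ i ω) ∂μ) =
        (∫ ω, ψ k ω ∂μ) * ∏ i ∈ Finset.Icc (k+1) ℓ, (1 - ∫ ω, ψ i ω ∂μ) ∧
      (χ / k) * (((k:ℝ) - 1) / ((ℓ:ℝ) - 1)) ^ χ ≤
        (∫ ω, ψ k ω * ∏ i ∈ Finset.Icc (k+1) ℓ, (1 - ψ i ω) ∂μ) ∧
      (∫ ω, ψ k ω * ∏ i ∈ Finset.Icc (k+1) ℓ, (1 - ψ i ω) ∂μ) ≤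
        (χ / ((k:ℝ) - 1)) * (((k:ℝ) + 1) / ((ℓ:ℝ) + 1)) ^ χ := by
  classical
  have hα0 : 0 ≤ α := hα.1
  have hα1 : α < 1 := hα.2
  have hu0 : 0 ≤ u := by rw [hu]; exact div_nonneg hα0 (by linarith)
  have hu1 : (0:ℝ) < 2 + 2*u := by linarith
  have hχl : 1/2 ≤ χ := by rw [hχ, le_div_iff₀ hu1]; linarith
  have hχu : χ < 1 := by rw [hχ, div_lt_one hu1]; linarith
  have hχ0 : (0:ℝ) < χ := by linarith
  have hm0 : (0:ℝ) < (m:ℝ) := by exact_mod_cast (by omega : 0 < m)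
  -- expectation of ψ j
  have hEψ : ∀ j : ℕ, 2 ≤ j → ∫ ω, ψ j ω ∂μ = χ / ((j:ℝ) - 2 + 2*χ) := by
    intro j hj
    have hj2 : (2:ℝ) ≤ (j:ℝ) := by exact_mod_cast hj
    have hp : (0:ℝ) < (m:ℝ) + 2*m*u := by nlinarith
    have hq : (0:ℝ) < (2*(j:ℝ) - 3)*m + 2*m*u*((j:ℝ) - 1) := by nlinarith
    have h1 : ∫ ω, ψ j ω ∂μ = ∫ x, x ∂(Measure.map (ψ j) μ) :=
      (MeasureTheory.integral_map (hmeas j).aemeasurable aestronglyMeasurable_id).symm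
    rw [h1, hdist j hj, betaMeasure_integral_id hp hq]
    have hd3 : (0:ℝ) < (2 + 2*u)*(j:ℝ) - 2 := by nlinarith
    have e1 : ((m:ℝ) + 2*m*u) / (((m:ℝ) + 2*m*u) + ((2*(j:ℝ) - 3)*m + 2*m*u*((j:ℝ) - 1)))
        = (1 + 2*u) / ((2 + 2*u)*(j:ℝ) - 2) := by
      rw [div_eq_div_iff (by nlinarith : (0:ℝ) < _).ne' hd3.ne']
      ring
    have hd2 : (0:ℝ) < (j:ℝ) - 2 + 2*χ := by nlinarith
    have e2 : χ / ((j:ℝ) - 2 + 2*χ) = (1 + 2*u) / ((2 + 2*u)*(j:ℝ) - 2) := by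
      rw [div_eq_div_iff hd2.ne' hd3.ne', hχ]
      field_simp
      ring
    rw [e1, e2]
  -- a.e. membership in (0,1)
  have hae : ∀ j : ℕ, 2 ≤ j → ∀ᵐ ω ∂μ, ψ j ω ∈ Set.Ioo (0:ℝ) 1 := by
    intro j hj
    have h0 : μ ((ψ j) ⁻¹' (Set.Ioo (0:ℝ) 1)ᶜ) = 0 := by
      rw [← Measure.map_apply (hmeas j) measurableSet_Ioo.compl, hdist j hj]
      exact betaMeasure_compl _ _
    rw [MeasureTheory.ae_iff]
    exact h0
  have hint : ∀ j : ℕ, 2 ≤ j → Integrable (ψ j) μ := by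
    intro j hj
    apply (integrable_const (1:ℝ)).mono' (hmeas j).aestronglyMeasurable
    filter_upwards [hae j hj] with ω hω
    rw [Real.norm_eq_abs, abs_of_pos hω.1]
    simp [hω.2.le]
  -- independence factorization
  set g : ℕ → ℝ → ℝ := fun i x => if i = k then x else 1 - x with hgdef
  have hgmeas : ∀ i, Measurable (g i) := by
    intro i
    by_cases h : i = k
    · simp only [hgdef, h, eq_self_iff_true, ↓reduceIte]; exact measurable_id
    · simp only [hgdef, h, ↓reduceIte]; exact measurable_const.sub measurable_id
  have hF : iIndepFun (fun i => g i ∘ ψ i) μ := hindep.comp g hgmeas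
  have hFmeas : ∀ i, Measurable (g i ∘ ψ i) := fun i => (hgmeas i).comp (hmeas i)
  have hknot : k ∉ Finset.Icc (k+1) ℓ := by simp
  have hL : (fun ω => ψ k ω * ∏ i ∈ Finset.Icc (k+1) ℓ, (1 - ψ i ω))
      = fun ω => ∏ i ∈ insert k (Finset.Icc (k+1) ℓ), (g i ∘ ψ i) ω := by
    funext ω
    rw [Finset.prod_insert hknot]
    congr 1
    · simp [hgdef, Function.comp]
    · refine (Finset.prod_congr rfl fun i hi => ?_).symm
      have : i ≠ k := by have := (Finset.mem_Icc.mp hi).1; omega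
      simp [hgdef, Function.comp, this]
  have hfact : ∫ ω, ψ k ω * ∏ i ∈ Finset.Icc (k+1) ℓ, (1 - ψ i ω) ∂μ
      = (∫ ω, ψ k ω ∂μ) * ∏ i ∈ Finset.Icc (k+1) ℓ, (1 - ∫ ω, ψ i ω ∂μ) := by
    rw [hL, integral_finset_prod_of_iIndepFun hFmeas hF, Finset.prod_insert hknot]
    congr 1
    · congr 1
      funext ω
      simp [hgdef, Function.comp]
    · refine Finset.prod_congr rfl fun i hi => ?_
      have hik : i ≠ k := by have := (Finset.mem_Icc.mp hi).1; omega
      have hi2 : 2 ≤ i := by have := (Finset.mem_Icc.mp hi).1; omega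
      have h2 : (fun ω => (g i ∘ ψ i) ω) = fun ω => 1 - ψ i ω := by
        funext ω; simp [hgdef, Function.comp, hik]
      rw [h2, integral_sub (integrable_const 1) (hint i hi2), integral_const]
      simp
  -- rewrite the factorized value in closed form
  have hclosed : (∫ ω, ψ k ω ∂μ) * ∏ i ∈ Finset.Icc (k+1) ℓ, (1 - ∫ ω, ψ i ω ∂μ)
      = χ / ((k:ℝ) - 2 + 2*χ) *
        ∏ i ∈ Finset.Icc (k+1) ℓ, (((i:ℝ) - 2 + χ) / ((i:ℝ) - 2 + 2*χ)) := by
    rw [hEψ k hk]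
    congr 1
    refine Finset.prod_congr rfl fun i hi => ?_
    have hi2 : 2 ≤ i := by have := (Finset.mem_Icc.mp hi).1; omega
    have hi2' : (2:ℝ) ≤ (i:ℝ) := by exact_mod_cast hi2
    have hd : (i:ℝ) - 2 + 2*χ ≠ 0 := by nlinarith
    rw [hEψ i hi2, one_sub_div hd]
    congr 1
    ring
  have hb := prod_bounds hχl hχu hk hkℓ
  refine ⟨hfact, ?_, ?_⟩
  · rw [hfact, hclosed]; exact hb.1
  · rw [hfact, hclosed]; exact hb.2
end

section
/- For all integers n > k ≥ 2, the quantity E[d_n(k)] := m + m ∑_{ℓ=k}^{n−1} E[ψ_k] ∏_{i=k+1}^{ℓ}(1 − E[ψ_i]) satisfies m + m·(χ/(1−χ))·((n/k)^{1−χ} − 1)·(1 − 1/k) ≤ E[d_n(k)] ≤ m + m·(χ/(1−χ))·((n/k)^{1−χ} − 1)·(1 + 4/k). -/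
open MeasureTheory ProbabilityTheory Real
open scoped NNReal ENNReal

/-- The Beta(p,q) measure on ℝ: density `x^(p-1)(1-x)^(q-1)/B(p,q)` on `(0,1)`. -/
noncomputable def betaMeasure' (p q : ℝ) : Measure ℝ :=
  MeasureTheory.volume.withDensity fun x => ENNReal.ofReal
    ((Set.Ioo (0:ℝ) 1).indicator
      (fun t => t ^ (p - 1) * (1 - t) ^ (q - 1) /
        ∫ s in Set.Ioo (0:ℝ) 1, s ^ (p - 1) * (1 - s) ^ (q - 1)) x)

noncomputable def betaI (p q : ℝ) : ℝ :=
  ∫ s in Set.Ioo (0:ℝ) 1, s ^ (p - 1) * (1 - s) ^ (q - 1)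

lemma betaCont {p q : ℝ} (hp : 1 ≤ p) (hq : 1 ≤ q) :
    Continuous fun s : ℝ => s ^ (p - 1) * (1 - s) ^ (q - 1) := by
  have h1 : Continuous fun s : ℝ => s ^ (p - 1) :=
    Real.continuous_rpow_const (by linarith)
  have h2 : Continuous fun s : ℝ => (1 - s) ^ (q - 1) :=
    (Real.continuous_rpow_const (by linarith)).comp (continuous_const.sub continuous_id)
  exact h1.mul h2

lemma betaIntegrable {p q : ℝ} (hp : 1 ≤ p) (hq : 1 ≤ q) :
    IntegrableOn (fun s : ℝ => s ^ (p - 1) * (1 - s) ^ (q - 1)) (Set.Ioo 0 1) := by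
  exact ((betaCont hp hq).integrableOn_Icc (a := 0) (b := 1)).mono_set Set.Ioo_subset_Icc_self

lemma betaI_pos {p q : ℝ} (hp : 1 ≤ p) (hq : 1 ≤ q) : 0 < betaI p q := by
  rw [betaI, setIntegral_pos_iff_support_of_nonneg_ae]
  · have hsub : Set.Ioo (0:ℝ) 1 ⊆
        Function.support fun s : ℝ => s ^ (p-1) * (1-s) ^ (q-1) := by
      intro x hx
      have h1 : (0:ℝ) < x ^ (p-1) := Real.rpow_pos_of_pos hx.1 _
      have h2 : (0:ℝ) < (1-x) ^ (q-1) := Real.rpow_pos_of_pos (by linarith [hx.2]) _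
      exact (mul_pos h1 h2).ne'
    have heq : (Function.support fun s : ℝ => s ^ (p-1) * (1-s) ^ (q-1)) ∩ Set.Ioo 0 1 =
        Set.Ioo 0 1 := Set.inter_eq_self_of_subset_right hsub
    rw [heq]
    simp [Real.volume_Ioo]
  · filter_upwards [ae_restrict_mem measurableSet_Ioo] with x hx
    have h1 : (0:ℝ) ≤ x ^ (p-1) := Real.rpow_nonneg hx.1.le _
    have h2 : (0:ℝ) ≤ (1-x) ^ (q-1) := Real.rpow_nonneg (by linarith [hx.2]) _
    exact mul_nonneg h1 h2
  · exact betaIntegrable hp hq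

lemma betaI_rec {p q : ℝ} (hp : 1 ≤ p) (hq : 1 ≤ q) :
    (p + q) * betaI (p + 1) q = p * betaI p q := by
  set F' : ℝ → ℝ := fun x => p * x ^ (p-1) * (1-x) ^ q - q * x ^ p * (1-x) ^ (q-1) with hF'
  have hderiv : ∀ x ∈ Set.uIcc (0:ℝ) 1,
      HasDerivAt (fun x : ℝ => x ^ p * (1-x) ^ q) (F' x) x := by
    intro x _
    have h1 : HasDerivAt (fun x : ℝ => x ^ p) (p * x ^ (p-1)) x :=
      Real.hasDerivAt_rpow_const (Or.inr hp)
    have h2 : HasDerivAt (fun x : ℝ => (1-x) ^ q) (q * (1-x) ^ (q-1) * (-1)) x := by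
      have ha : HasDerivAt (fun x : ℝ => 1 - x) (-1) x := by
        exact (hasDerivAt_id' x).const_sub (1:ℝ)
      exact (Real.hasDerivAt_rpow_const (x := 1 - x) (p := q) (Or.inr hq)).comp x ha
    have : HasDerivAt (fun x : ℝ => x ^ p * (1-x) ^ q) _ x := h1.mul h2
    convert this using 1
    show p * x ^ (p-1) * (1-x) ^ q - q * x ^ p * (1-x) ^ (q-1) = _
    ring
  have hcont : Continuous F' := by
    have c1 : Continuous fun x : ℝ => x ^ (p-1) := Real.continuous_rpow_const (by linarith)
    have c2 : Continuous fun x : ℝ => x ^ p := Real.continuous_rpow_const (by linarith)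
    have c3 : Continuous fun x : ℝ => (1-x) ^ q :=
      (Real.continuous_rpow_const (by linarith)).comp (continuous_const.sub continuous_id)
    have c4 : Continuous fun x : ℝ => (1-x) ^ (q-1) :=
      (Real.continuous_rpow_const (by linarith)).comp (continuous_const.sub continuous_id)
    exact ((continuous_const.mul c1).mul c3).sub ((continuous_const.mul c2).mul c4)
  have hFTC : ∫ x in (0:ℝ)..1, F' x = 0 := by
    rw [intervalIntegral.integral_eq_sub_of_hasDerivAt hderiv
      (hcont.intervalIntegrable 0 1)]
    have h0 : (0:ℝ) ^ p = 0 := Real.zero_rpow (by linarith)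
    have h1 : (0:ℝ) ^ q = 0 := Real.zero_rpow (by linarith)
    norm_num [h0, h1]
  have hIoo : ∫ x in Set.Ioo (0:ℝ) 1, F' x = 0 := by
    rw [← MeasureTheory.integral_Ioc_eq_integral_Ioo,
      ← intervalIntegral.integral_of_le zero_le_one]
    exact hFTC
  have hcongr : ∫ x in Set.Ioo (0:ℝ) 1, F' x =
      ∫ x in Set.Ioo (0:ℝ) 1,
        (p * (x ^ (p-1) * (1-x) ^ (q-1)) - (p+q) * (x ^ ((p+1)-1) * (1-x) ^ (q-1))) := by
    apply setIntegral_congr_fun measurableSet_Ioo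
    intro x hx
    have hx0 : x ≠ 0 := ne_of_gt hx.1
    have hx1 : (1:ℝ) - x ≠ 0 := sub_ne_zero.mpr (ne_of_gt hx.2)
    have e1 : (1-x) ^ q = (1-x) ^ (q-1) * (1-x) := by
      rw [← Real.rpow_add_one hx1]; ring_nf
    have e2 : x ^ p = x ^ (p-1) * x := by
      rw [← Real.rpow_add_one hx0]; ring_nf
    have e3 : x ^ ((p+1)-1) = x ^ (p-1) * x := by
      rw [← Real.rpow_add_one hx0]; ring_nf
    simp only [hF', e1, e2, e3]
    ring
  have hi1 : IntegrableOn (fun x : ℝ => x ^ (p-1) * (1-x) ^ (q-1)) (Set.Ioo 0 1) :=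
    betaIntegrable hp hq
  have hi2 : IntegrableOn (fun x : ℝ => x ^ ((p+1)-1) * (1-x) ^ (q-1)) (Set.Ioo 0 1) :=
    betaIntegrable (by linarith) hq
  rw [hcongr] at hIoo
  rw [MeasureTheory.integral_sub ((hi1.const_mul p)) ((hi2.const_mul (p+q)))] at hIoo
  rw [MeasureTheory.integral_const_mul, MeasureTheory.integral_const_mul] at hIoo
  have : p * betaI p q - (p+q) * betaI (p+1) q = 0 := hIoo
  linarith

lemma betaMean {p q : ℝ} (hp : 1 ≤ p) (hq : 1 ≤ q) :
    ∫ x, x ∂(betaMeasure' p q) = p / (p + q) := by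
  set g : ℝ → ℝ := (Set.Ioo (0:ℝ) 1).indicator
      (fun t => t ^ (p - 1) * (1 - t) ^ (q - 1) / betaI p q) with hg
  have hgmeas : Measurable g :=
    (((betaCont hp hq).measurable).div_const _).indicator measurableSet_Ioo
  have hβ : betaMeasure' p q = MeasureTheory.volume.withDensity
      fun x => ((Real.toNNReal (g x) : ℝ≥0) : ℝ≥0∞) := by
    rfl
  rw [hβ]
  rw [integral_withDensity_eq_integral_smul (by fun_prop) (fun x => x)]
  have hgnn : ∀ x, 0 ≤ g x := by
    intro x
    rw [hg]
    apply Set.indicator_nonneg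
    intro t ht
    have h1 : (0:ℝ) ≤ t ^ (p-1) := Real.rpow_nonneg ht.1.le _
    have h2 : (0:ℝ) ≤ (1-t) ^ (q-1) := Real.rpow_nonneg (by linarith [ht.2]) _
    exact div_nonneg (mul_nonneg h1 h2) (betaI_pos hp hq).le
  have hsmul : ∀ x : ℝ, (Real.toNNReal (g x) : ℝ≥0) • x = g x * x := by
    intro x
    rw [NNReal.smul_def, smul_eq_mul, Real.coe_toNNReal _ (hgnn x)]
  simp_rw [hsmul]
  have hind : ∀ x : ℝ, g x * x =
      (Set.Ioo (0:ℝ) 1).indicator (fun t => t ^ (p-1) * (1-t) ^ (q-1) / betaI p q * t) x := by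
    intro x
    rw [hg]
    by_cases hx : x ∈ Set.Ioo (0:ℝ) 1
    · simp [Set.indicator_of_mem hx]
    · simp [Set.indicator_of_notMem hx]
  simp_rw [hind]
  rw [MeasureTheory.integral_indicator measurableSet_Ioo]
  have hcongr : ∫ x in Set.Ioo (0:ℝ) 1, x ^ (p-1) * (1-x) ^ (q-1) / betaI p q * x =
      ∫ x in Set.Ioo (0:ℝ) 1, (x ^ ((p+1)-1) * (1-x) ^ (q-1)) / betaI p q := by
    apply setIntegral_congr_fun measurableSet_Ioo
    intro x hx
    have hx0 : x ≠ 0 := ne_of_gt hx.1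
    have e3 : x ^ ((p+1)-1) = x ^ (p-1) * x := by
      rw [← Real.rpow_add_one hx0]; ring_nf
    simp only []
    rw [e3]; ring
  rw [hcongr, MeasureTheory.integral_div]
  have hrec := betaI_rec hp hq
  have hB : betaI p q ≠ 0 := (betaI_pos hp hq).ne'
  have hpq : p + q ≠ 0 := by positivity
  have hval : (betaI (p+1) q : ℝ) = p * betaI p q / (p + q) := by
    field_simp
    linarith [hrec]
  rw [betaI] at hval
  rw [hval]
  field_simp

noncomputable def Vp (χ : ℝ) (k n : ℕ) : ℝ :=
  ∏ i ∈ Finset.Icc (k+1) n, (((i:ℝ) - 2 + χ) / ((i:ℝ) - 3 + 2*χ))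

lemma Vp_succ (χ : ℝ) (k n : ℕ) (hkn : k ≤ n) :
    Vp χ k (n+1) = Vp χ k n * (((n:ℝ) - 1 + χ) / ((n:ℝ) - 2 + 2*χ)) := by
  rw [Vp, Vp, Finset.prod_Icc_succ_top (by omega)]
  push_cast
  rw [show ((n:ℝ)+1-2+χ) = (n:ℝ)-1+χ from by ring,
    show ((n:ℝ)+1-3+2*χ) = (n:ℝ)-2+2*χ from by ring]

lemma prodP {χ : ℝ} (hχ : 1/2 ≤ χ) (hχ1 : χ < 1) {k : ℕ} (hk : 2 ≤ k) :
    ∀ n, k ≤ n → ∏ i ∈ Finset.Icc (k+1) n, (1 - χ/((i:ℝ) - 2 + 2*χ)) =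
      Vp χ k n * (((k:ℝ) - 2 + 2*χ) / ((n:ℝ) - 2 + 2*χ)) := by
  intro n hn
  induction n, hn using Nat.le_induction with
  | base =>
    have hd : ((k:ℝ) - 2 + 2*χ) ≠ 0 := by
      have : (2:ℝ) ≤ (k:ℝ) := by exact_mod_cast hk
      nlinarith
    rw [Vp]
    rw [Finset.Icc_eq_empty (by omega), Finset.prod_empty, Finset.prod_empty]
    rw [div_self hd]; ring
  | succ n hn ih =>
    have hk' : (2:ℝ) ≤ (k:ℝ) := by exact_mod_cast hk
    have hn' : (k:ℝ) ≤ (n:ℝ) := by exact_mod_cast hn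
    have hd1 : (0:ℝ) < (n:ℝ) - 2 + 2*χ := by nlinarith
    have hd2 : (0:ℝ) < (n:ℝ) - 1 + 2*χ := by nlinarith
    rw [Finset.prod_Icc_succ_top (by omega), ih, Vp_succ χ k n hn]
    push_cast
    have he : (1:ℝ) - χ/((n:ℝ) + 1 - 2 + 2*χ) = ((n:ℝ) - 1 + χ)/((n:ℝ) - 1 + 2*χ) := by
      rw [show ((n:ℝ)+1-2+2*χ) = (n:ℝ)-1+2*χ from by ring,
        show ((n:ℝ)-1+χ) = ((n:ℝ)-1+2*χ) - χ from by ring, sub_div, div_self hd2.ne']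
    rw [he, show ((n:ℝ)+1-2+2*χ) = (n:ℝ)-1+2*χ from by ring]
    field_simp

lemma sumS {χ : ℝ} (hχ : 1/2 ≤ χ) (hχ1 : χ < 1) {k : ℕ} (hk : 2 ≤ k) :
    ∀ N, k ≤ N → ∑ ℓ ∈ Finset.Icc k N,
        (χ/((k:ℝ) - 2 + 2*χ)) * ∏ i ∈ Finset.Icc (k+1) ℓ, (1 - χ/((i:ℝ) - 2 + 2*χ)) =
      χ/(1-χ) * (Vp χ k (N+1) - 1) := by
  intro N hN
  have hk' : (2:ℝ) ≤ (k:ℝ) := by exact_mod_cast hk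
  have hdk : (0:ℝ) < (k:ℝ) - 2 + 2*χ := by nlinarith
  have h1χ : (0:ℝ) < 1 - χ := by linarith
  induction N, hN using Nat.le_induction with
  | base =>
    rw [Finset.Icc_self, Finset.sum_singleton, Finset.Icc_eq_empty (by omega),
      Finset.prod_empty, Vp, Finset.Icc_self, Finset.prod_singleton]
    push_cast
    rw [show ((k:ℝ) + 1 - 2 + χ) = (k:ℝ) - 1 + χ by ring,
      show ((k:ℝ) + 1 - 3 + 2*χ) = (k:ℝ) - 2 + 2*χ by ring]
    have e1 : (k:ℝ) - 2 + χ*2 ≠ 0 := (by linarith : (0:ℝ) < (k:ℝ) - 2 + χ*2).ne'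
    field_simp [hdk.ne', h1χ.ne', e1]
    ring
  | succ N hN ih =>
    have hN' : (k:ℝ) ≤ (N:ℝ) := by exact_mod_cast hN
    have hd1 : (0:ℝ) < (N:ℝ) - 1 + 2*χ := by nlinarith
    rw [Finset.sum_Icc_succ_top (by omega), ih, prodP hχ hχ1 hk (N+1) (by omega),
      Vp_succ χ k (N+1) (by omega)]
    push_cast
    rw [show ((N:ℝ) + 1 - 2 + 2*χ) = (N:ℝ) - 1 + 2*χ by ring,
      show ((N:ℝ) + 1 - 1 + χ) = (N:ℝ) + χ by ring]
    have e1 : (k:ℝ) - 2 + χ*2 ≠ 0 := (by linarith : (0:ℝ) < (k:ℝ) - 2 + χ*2).ne'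
    have e2 : (N:ℝ) - 1 + χ*2 ≠ 0 := (by linarith : (0:ℝ) < (N:ℝ) - 1 + χ*2).ne'
    field_simp [hdk.ne', h1χ.ne', hd1.ne', e1, e2]
    ring

lemma rpow_base_one_le {a : ℝ} (ha : 1 ≤ a) {e : ℝ} (he : 0 ≤ e) : 1 ≤ a ^ e := by
  calc (1:ℝ) = a ^ (0:ℝ) := (Real.rpow_zero a).symm
  _ ≤ a ^ e := Real.rpow_le_rpow_of_exponent_le ha he
lemma lowB {χ : ℝ} (hχ : 1/2 ≤ χ) (hχ1 : χ < 1) {k : ℕ} (hk : 2 ≤ k) :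
    ∀ n, k ≤ n → 1 + (1 - 1/(k:ℝ)) * (((n:ℝ)/(k:ℝ)) ^ (1-χ) - 1) ≤ Vp χ k n := by
  have hk' : (2:ℝ) ≤ (k:ℝ) := by exact_mod_cast hk
  have hk0 : (0:ℝ) < (k:ℝ) := by linarith
  have hA0 : (0:ℝ) ≤ 1 - 1/(k:ℝ) := by
    have : 1/(k:ℝ) ≤ 1/2 := by
      apply one_div_le_one_div_of_le <;> linarith
    linarith
  have hA1 : 1 - 1/(k:ℝ) ≤ 1 := by
    have : (0:ℝ) < 1/(k:ℝ) := by positivity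
    linarith
  intro n hn
  induction n, hn using Nat.le_induction with
  | base =>
    rw [div_self hk0.ne', Real.one_rpow, Vp, Finset.Icc_eq_empty (by omega),
      Finset.prod_empty]
    ring_nf
    exact le_refl 1
  | succ n hn ih =>
    have hn' : (k:ℝ) ≤ (n:ℝ) := by exact_mod_cast hn
    have hn0 : (0:ℝ) < (n:ℝ) := by linarith
    have hd : (0:ℝ) < (n:ℝ) - 2 + 2*χ := by nlinarith
    have hdn : (n:ℝ) - 2 + 2*χ ≤ (n:ℝ) := by linarith
    set A := 1 - 1/(k:ℝ) with hA
    set x : ℝ := ((n:ℝ)/(k:ℝ)) ^ (1-χ) with hx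
    set y : ℝ := (((n:ℝ)+1)/(k:ℝ)) ^ (1-χ) with hy
    have hb1 : (1:ℝ) ≤ (n:ℝ)/(k:ℝ) := (one_le_div hk0).mpr hn'
    have hx1 : 1 ≤ x := rpow_base_one_le hb1 (by linarith)
    have hBer : y ≤ x * (1 + (1-χ)/(n:ℝ)) := by
      have hsplit : ((n:ℝ)+1)/(k:ℝ) = ((n:ℝ)/(k:ℝ)) * (1 + 1/(n:ℝ)) := by
        field_simp
      have hB2 : (1 + 1/(n:ℝ)) ^ (1-χ) ≤ 1 + (1-χ)/(n:ℝ) := by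
        have := rpow_one_add_le_one_add_mul_self (s := 1/(n:ℝ))
          (le_trans (by norm_num : (-1:ℝ) ≤ 0) (by positivity))
          (p := 1-χ) (by linarith) (by linarith)
        calc (1 + 1/(n:ℝ)) ^ (1-χ) ≤ 1 + (1-χ) * (1/(n:ℝ)) := this
          _ = 1 + (1-χ)/(n:ℝ) := by ring
      rw [hy, hsplit, Real.mul_rpow (by positivity : (0:ℝ) ≤ (n:ℝ)/(k:ℝ))
        (by positivity : (0:ℝ) ≤ 1 + 1/(n:ℝ))]
      exact mul_le_mul_of_nonneg_left hB2 (by positivity)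
    -- V (n+1) = V n * r with r = 1 + (1-χ)/d
    have hVs : Vp χ k (n+1) = Vp χ k n * (1 + (1-χ)/((n:ℝ) - 2 + 2*χ)) := by
      rw [Vp_succ χ k n hn]
      congr 1
      rw [one_add_div hd.ne']; ring
    have hr0 : (0:ℝ) ≤ 1 + (1-χ)/((n:ℝ) - 2 + 2*χ) := by
      have : (0:ℝ) ≤ (1-χ)/((n:ℝ) - 2 + 2*χ) := div_nonneg (by linarith) hd.le
      linarith
    have hAx : A * x ≤ 1 + A * (x - 1) := by nlinarith
    have hAx0 : (0:ℝ) ≤ A * x := by positivity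
    -- key : (1 + A(x-1)) * r ≥ 1 + A(y-1)
    have hkey : 1 + A * (y - 1) ≤ (1 + A * (x - 1)) * (1 + (1-χ)/((n:ℝ) - 2 + 2*χ)) := by
      have h1 : A * (y - x) ≤ A * (x * (1-χ)/(n:ℝ)) := by
        apply mul_le_mul_of_nonneg_left _ hA0
        have hexp2 : x * (1 + (1-χ)/(n:ℝ)) = x + x * (1-χ)/(n:ℝ) := by ring
        have : y - x ≤ x * (1-χ)/(n:ℝ) := by
          rw [hexp2] at hBer; linarith
        linarith
      have h2 : A * x * (1-χ)/(n:ℝ) ≤ (1 + A * (x - 1)) * (1-χ)/((n:ℝ) - 2 + 2*χ) := by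
        rw [div_le_div_iff₀ hn0 hd]
        have hc0 : (0:ℝ) ≤ A * x * (1-χ) := mul_nonneg hAx0 (by linarith)
        have e1 : A * x * (1-χ) * ((n:ℝ) - 2 + 2*χ) ≤ A * x * (1-χ) * (n:ℝ) :=
          mul_le_mul_of_nonneg_left hdn hc0
        have e2 : A * x * (1-χ) * (n:ℝ) ≤ (1 + A * (x - 1)) * (1-χ) * (n:ℝ) :=
          mul_le_mul_of_nonneg_right
            (mul_le_mul_of_nonneg_right hAx (by linarith)) hn0.le
        linarith
      have h3 : A * (y - x) ≤ (1 + A * (x - 1)) * (1-χ)/((n:ℝ) - 2 + 2*χ) := by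
        calc A * (y - x) ≤ A * (x * (1-χ)/(n:ℝ)) := h1
          _ = A * x * (1-χ)/(n:ℝ) := by ring
          _ ≤ _ := h2
      have hexp : (1 + A * (x - 1)) * (1 + (1-χ)/((n:ℝ) - 2 + 2*χ))
          = (1 + A * (x - 1)) + (1 + A * (x - 1)) * (1-χ)/((n:ℝ) - 2 + 2*χ) := by ring
      rw [hexp]
      have : 1 + A * (y - 1) = (1 + A * (x - 1)) + A * (y - x) := by ring
      rw [this]
      linarith
    have hpush : (((n+1:ℕ)):ℝ) = (n:ℝ) + 1 := by push_cast; ring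
    rw [hpush, hVs]
    calc 1 + A * (y - 1) ≤ (1 + A * (x - 1)) * (1 + (1-χ)/((n:ℝ) - 2 + 2*χ)) := hkey
      _ ≤ Vp χ k n * (1 + (1-χ)/((n:ℝ) - 2 + 2*χ)) :=
        mul_le_mul_of_nonneg_right ih hr0

set_option maxHeartbeats 1000000 in
lemma upB {χ : ℝ} (hχ : 1/2 ≤ χ) (hχ1 : χ < 1) {k : ℕ} (hk : 2 ≤ k) :
    ∀ n, k ≤ n → Vp χ k n ≤ 1 + (1 + 4/(k:ℝ)) * (((n:ℝ)/(k:ℝ)) ^ (1-χ) - 1) := by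
  have hk' : (2:ℝ) ≤ (k:ℝ) := by exact_mod_cast hk
  have hk0 : (0:ℝ) < (k:ℝ) := by linarith
  set B := 1 + 4/(k:ℝ) with hB
  have hB1 : 1 ≤ B := by
    rw [hB]
    have : (0:ℝ) ≤ 4/(k:ℝ) := by positivity
    linarith
  have hB0 : (0:ℝ) ≤ B := by linarith
  clear_value B
  intro n hn
  induction n, hn using Nat.le_induction with
  | base =>
    rw [div_self hk0.ne', Real.one_rpow, Vp, Finset.Icc_eq_empty (by omega),
      Finset.prod_empty]
    ring_nf
    exact le_refl 1
  | succ n hn ih =>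
    have hn' : (k:ℝ) ≤ (n:ℝ) := by exact_mod_cast hn
    have hn0 : (0:ℝ) < (n:ℝ) := by linarith
    have hn10 : (0:ℝ) < (n:ℝ) + 1 := by linarith
    have hd : (0:ℝ) < (n:ℝ) - 2 + 2*χ := by nlinarith
    set x : ℝ := ((n:ℝ)/(k:ℝ)) ^ (1-χ) with hx
    set y : ℝ := (((n:ℝ)+1)/(k:ℝ)) ^ (1-χ) with hy
    have hb1 : (1:ℝ) ≤ (n:ℝ)/(k:ℝ) := (one_le_div hk0).mpr hn'
    have hx1 : 1 ≤ x := rpow_base_one_le hb1 (by linarith)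
    have hx0 : (0:ℝ) ≤ x := by linarith
    have hy0 : (0:ℝ) ≤ y := by rw [hy]; positivity
    have hbase0 : (n:ℝ)/(k:ℝ) ≤ ((n:ℝ)+1)/(k:ℝ) := by gcongr; linarith
    have hxy : x ≤ y := by
      rw [hx, hy]
      exact Real.rpow_le_rpow (by positivity) hbase0 (by linarith)
    have hBer : x ≤ y * (1 - (1-χ)/((n:ℝ)+1)) := by
      have hsplit : (n:ℝ)/(k:ℝ) = (((n:ℝ)+1)/(k:ℝ)) * (1 + (-(1/((n:ℝ)+1)))) := by
        field_simp
        ring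
      have hs1 : (-1:ℝ) ≤ -(1/((n:ℝ)+1)) := by
        have h1 : 1/((n:ℝ)+1) ≤ 1 := by
          rw [div_le_one hn10]; linarith
        linarith
      have hB2 : (1 + (-(1/((n:ℝ)+1)))) ^ (1-χ) ≤ 1 - (1-χ)/((n:ℝ)+1) := by
        have := rpow_one_add_le_one_add_mul_self (s := -(1/((n:ℝ)+1))) hs1
          (p := 1-χ) (by linarith) (by linarith)
        calc (1 + (-(1/((n:ℝ)+1)))) ^ (1-χ) ≤ 1 + (1-χ) * (-(1/((n:ℝ)+1))) := this
          _ = 1 - (1-χ)/((n:ℝ)+1) := by ring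
      have hbase : (0:ℝ) ≤ 1 + (-(1/((n:ℝ)+1))) := by
        have h1 : 1/((n:ℝ)+1) ≤ 1 := by rw [div_le_one hn10]; linarith
        linarith
      rw [hx, hsplit, Real.mul_rpow (by positivity : (0:ℝ) ≤ ((n:ℝ)+1)/(k:ℝ)) hbase]
      exact mul_le_mul_of_nonneg_left hB2 hy0
    -- sqrt bound: B * x ≤ 2 * ((n:ℝ)+1) / k
    have hxst : x ≤ Real.sqrt (n:ℝ) / Real.sqrt (k:ℝ) := by
      have h1 : x ≤ ((n:ℝ)/(k:ℝ)) ^ (1/2 : ℝ) := by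
        rw [hx]
        exact Real.rpow_le_rpow_of_exponent_le hb1 (by linarith)
      have h2 : ((n:ℝ)/(k:ℝ)) ^ (1/2 : ℝ) = Real.sqrt ((n:ℝ)/(k:ℝ)) :=
        (Real.sqrt_eq_rpow _).symm
      have h3 : Real.sqrt ((n:ℝ)/(k:ℝ)) = Real.sqrt (n:ℝ) / Real.sqrt (k:ℝ) :=
        Real.sqrt_div hn0.le _
      rw [h2, h3] at h1
      exact h1
    clear_value x y
    have hsqrt : B * x ≤ 2 * ((n:ℝ)+1) / (k:ℝ) := by
      set s : ℝ := Real.sqrt (n:ℝ) with hs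
      set t : ℝ := Real.sqrt (k:ℝ) with ht
      have hs2 : s^2 = (n:ℝ) := Real.sq_sqrt hn0.le
      have ht2 : t^2 = (k:ℝ) := Real.sq_sqrt hk0.le
      have hts : t ≤ s := Real.sqrt_le_sqrt hn'
      have ht0 : (0:ℝ) < t := Real.sqrt_pos.mpr hk0
      have hs0 : (0:ℝ) ≤ s := Real.sqrt_nonneg _
      have h2t : Real.sqrt 2 ≤ t := Real.sqrt_le_sqrt hk'
      have h2sq : (Real.sqrt 2)^2 = 2 := Real.sq_sqrt (by norm_num)
      have h20 : (0:ℝ) < Real.sqrt 2 := Real.sqrt_pos.mpr (by norm_num)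
      clear_value s t
      set q2 : ℝ := Real.sqrt 2 with hq2def
      clear_value q2
      have hxst' : x ≤ s / t := hxst
      have hw0 : (0:ℝ) ≤ s / t := div_nonneg hs0 ht0.le
      have htw : t * (s / t) = s := by field_simp
      have hsw2 : q2 * (s / t) ≤ s := by
        calc q2 * (s / t) ≤ t * (s / t) := mul_le_mul_of_nonneg_right h2t hw0
          _ = s := htw
      have h4w : 4 * (s / t) ≤ s^2 + 2 := by
        nlinarith [sq_nonneg (s - q2), hsw2, h2sq, h20, hw0]
      have hts2 : t * s ≤ s^2 := by
        calc t * s ≤ s * s := mul_le_mul_of_nonneg_right hts hs0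
          _ = s^2 := (sq s).symm
      have hkey : (t^2 + 4) * x ≤ 2*(s^2+1) := by
        have e1 : (t^2 + 4) * x ≤ (t^2 + 4) * (s / t) :=
          mul_le_mul_of_nonneg_left hxst' (by positivity)
        have e2 : (t^2 + 4) * (s / t) = t * s + 4 * (s / t) := by
          have h5 : t^2 * (s / t) = t * (t * (s / t)) := by ring
          rw [add_mul, h5, htw]
        linarith
      rw [← sub_nonneg] at hkey ⊢
      have hcast : 2 * ((n:ℝ)+1) / (k:ℝ) - B * x = ((2*(s^2+1)) - (t^2+4)*x) / t^2 := by
        rw [hs2, ht2, hB]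
        field_simp
      rw [hcast]
      exact div_nonneg hkey (by positivity)
    -- main step
    have hVs : Vp χ k (n+1) = Vp χ k n * (1 + (1-χ)/((n:ℝ) - 2 + 2*χ)) := by
      rw [Vp_succ χ k n hn]
      congr 1
      rw [one_add_div hd.ne']; ring
    have hr0 : (0:ℝ) ≤ 1 + (1-χ)/((n:ℝ) - 2 + 2*χ) := by
      have : (0:ℝ) ≤ (1-χ)/((n:ℝ) - 2 + 2*χ) := div_nonneg (by linarith) hd.le
      linarith
    set R := 1 + B * (x - 1) with hR
    clear_value R
    -- key : R * (n+1) ≤ B * y * d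
    have hclaim : R * ((n:ℝ)+1) ≤ B * y * ((n:ℝ) - 2 + 2*χ) := by
      have h1 : B * x * ((n:ℝ) - 2 + 2*χ) ≤ B * y * ((n:ℝ) - 2 + 2*χ) :=
        mul_le_mul_of_nonneg_right (mul_le_mul_of_nonneg_left hxy hB0) hd.le
      have h2 : B * x * (3 - 2*χ) ≤ 4 * ((n:ℝ)+1) / (k:ℝ) := by
        have e0 : (0:ℝ) ≤ B * x := mul_nonneg hB0 hx0
        have e1 : B * x * (3 - 2*χ) ≤ B * x * 2 := by nlinarith
        have e2 : B * x * 2 ≤ 2 * (2 * ((n:ℝ)+1) / (k:ℝ)) := by linarith [hsqrt]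
        have e3 : 2 * (2 * ((n:ℝ)+1) / (k:ℝ)) = 4 * ((n:ℝ)+1) / (k:ℝ) := by ring
        linarith
      have h3 : R * ((n:ℝ)+1) = B * x * ((n:ℝ)-2+2*χ) + B * x * (3-2*χ)
          - (B - 1) * ((n:ℝ)+1) := by rw [hR]; ring
      have h4 : (B - 1) * ((n:ℝ)+1) = 4 * ((n:ℝ)+1) / (k:ℝ) := by
        rw [hB]; field_simp; ring
      linarith
    -- derive R * r ≤ 1 + B*(y-1)
    have hstep : R * (1 + (1-χ)/((n:ℝ) - 2 + 2*χ)) ≤ 1 + B * (y - 1) := by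
      have hq1 : R * (1-χ)/((n:ℝ) - 2 + 2*χ) ≤ B * y * (1-χ)/((n:ℝ)+1) := by
        rw [div_le_div_iff₀ hd hn10]
        have h6 : (0:ℝ) ≤ 1 - χ := by linarith
        nlinarith [hclaim]
      have hq2 : B * y * (1-χ)/((n:ℝ)+1) ≤ B * (y - x) := by
        have h5 : y * (1-χ)/((n:ℝ)+1) ≤ y - x := by
          have e : y * (1 - (1-χ)/((n:ℝ)+1)) = y - y * (1-χ)/((n:ℝ)+1) := by ring
          rw [e] at hBer
          linarith
        have h7 := mul_le_mul_of_nonneg_left h5 hB0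
        calc B * y * (1-χ)/((n:ℝ)+1) = B * (y * (1-χ)/((n:ℝ)+1)) := by ring
          _ ≤ B * (y - x) := h7
      have hexp : R * (1 + (1-χ)/((n:ℝ) - 2 + 2*χ)) = R + R * (1-χ)/((n:ℝ) - 2 + 2*χ) := by
        ring
      rw [hexp]
      have h8 : 1 + B * (y - 1) = R + B * (y - x) := by rw [hR]; ring
      linarith
    have hpush : (((n+1:ℕ)):ℝ) = (n:ℝ) + 1 := by push_cast; ring
    rw [hpush, ← hy, hVs]
    calc Vp χ k n * (1 + (1-χ)/((n:ℝ) - 2 + 2*χ))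
        ≤ R * (1 + (1-χ)/((n:ℝ) - 2 + 2*χ)) := mul_le_mul_of_nonneg_right ih hr0
      _ ≤ 1 + B * (y - 1) := hstep

/-- For all integers `n > k ≥ 2`, the quantity
`E[d_n(k)] := m + m ∑_{ℓ=k}^{n-1} E[ψ_k] ∏_{i=k+1}^ℓ (1 − E[ψ_i])` satisfies
`m + m (χ/(1-χ)) ((n/k)^(1-χ) − 1)(1 − 1/k) ≤ E[d_n(k)]
   ≤ m + m (χ/(1-χ)) ((n/k)^(1-χ) − 1)(1 + 4/k)`,
where `ψ_j ~ Beta(m+2mu, (2j-3)m+2mu(j-1))`, `u = α/(1-α)`, `χ = (1+2u)/(2+2u)`. -/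
theorem expected_degree_bounds {Ω : Type*} [MeasurableSpace Ω] (μ : Measure Ω)
    [IsProbabilityMeasure μ] (m : ℕ) (hm : 2 ≤ m) (α : ℝ) (hα : α ∈ Set.Ico (0:ℝ) 1)
    (u χ : ℝ) (hu : u = α / (1 - α)) (hχ : χ = (1 + 2*u) / (2 + 2*u))
    (ψ : ℕ → Ω → ℝ) (hmeas : ∀ j, Measurable (ψ j))
    (hdist : ∀ j : ℕ, 2 ≤ j → Measure.map (ψ j) μ =
      betaMeasure' (m + 2*m*u) ((2*(j:ℝ) - 3)*m + 2*m*u*((j:ℝ) - 1)))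
    (n k : ℕ) (hk : 2 ≤ k) (hkn : k < n) :
    m + m * (χ / (1 - χ)) * (((n:ℝ)/k) ^ (1 - χ) - 1) * (1 - 1/(k:ℝ)) ≤
        m + m * ∑ ℓ ∈ Finset.Icc k (n-1),
          (∫ ω, ψ k ω ∂μ) * ∏ i ∈ Finset.Icc (k+1) ℓ, (1 - ∫ ω, ψ i ω ∂μ) ∧
      m + m * ∑ ℓ ∈ Finset.Icc k (n-1),
          (∫ ω, ψ k ω ∂μ) * ∏ i ∈ Finset.Icc (k+1) ℓ, (1 - ∫ ω, ψ i ω ∂μ) ≤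
        m + m * (χ / (1 - χ)) * (((n:ℝ)/k) ^ (1 - χ) - 1) * (1 + 4/(k:ℝ)) := by
  obtain ⟨hα0, hα1⟩ := hα
  have hu0 : 0 ≤ u := by
    rw [hu]; exact div_nonneg hα0 (by linarith)
  have h2u : (0:ℝ) < 2 + 2*u := by linarith
  have hχl : 1/2 ≤ χ := by
    rw [hχ, le_div_iff₀ h2u]; linarith
  have hχu : χ < 1 := by
    rw [hχ, div_lt_one h2u]; linarith
  -- mean of ψ j
  have hpsi : ∀ j : ℕ, 2 ≤ j → ∫ ω, ψ j ω ∂μ = χ / ((j:ℝ) - 2 + 2*χ) := by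
    intro j hj
    have hmap : ∫ ω, ψ j ω ∂μ = ∫ x, x ∂(Measure.map (ψ j) μ) :=
      (integral_map (hmeas j).aemeasurable aestronglyMeasurable_id).symm
    rw [hmap, hdist j hj]
    have hm' : (2:ℝ) ≤ (m:ℝ) := by exact_mod_cast hm
    have hj' : (2:ℝ) ≤ (j:ℝ) := by exact_mod_cast hj
    set p : ℝ := m + 2*m*u with hp
    set q : ℝ := (2*(j:ℝ) - 3)*m + 2*m*u*((j:ℝ) - 1) with hq
    have hp1 : 1 ≤ p := by nlinarith
    have hq1 : 1 ≤ q := by nlinarith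
    rw [betaMean hp1 hq1]
    have hden : (j:ℝ) - 2 + 2*χ = ((2+2*u)*((j:ℝ)-2) + 2*(1+2*u)) / (2+2*u) := by
      rw [hχ]; field_simp
    have hpq : p + q = (m:ℝ) * ((2+2*u) * ((j:ℝ)-2+2*χ)) := by
      rw [hden, hp, hq]
      field_simp
      ring
    have hpp : p = (m:ℝ) * ((2+2*u) * χ) := by
      rw [hχ, hp]; field_simp
    rw [hpq, hpp]
    rw [mul_div_mul_left _ _ (by positivity), mul_div_mul_left _ _ (by positivity)]
  -- closed form of the sum
  have hkn1 : k ≤ n - 1 := by omega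
  have hsum : ∑ ℓ ∈ Finset.Icc k (n-1),
      (∫ ω, ψ k ω ∂μ) * ∏ i ∈ Finset.Icc (k+1) ℓ, (1 - ∫ ω, ψ i ω ∂μ) =
      χ/(1-χ) * (Vp χ k n - 1) := by
    have h1 : ∀ ℓ ∈ Finset.Icc k (n-1),
        (∫ ω, ψ k ω ∂μ) * ∏ i ∈ Finset.Icc (k+1) ℓ, (1 - ∫ ω, ψ i ω ∂μ) =
        (χ/((k:ℝ) - 2 + 2*χ)) * ∏ i ∈ Finset.Icc (k+1) ℓ, (1 - χ/((i:ℝ) - 2 + 2*χ)) := by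
      intro ℓ _
      rw [hpsi k hk]
      congr 1
      apply Finset.prod_congr rfl
      intro i hi
      have hik : k + 1 ≤ i := (Finset.mem_Icc.mp hi).1
      rw [hpsi i (by omega)]
    rw [Finset.sum_congr rfl h1, sumS hχl hχu hk (n-1) hkn1,
      Nat.sub_add_cancel (by omega : 1 ≤ n)]
  rw [hsum]
  have hm0 : (0:ℝ) ≤ (m:ℝ) := by positivity
  have hq0 : (0:ℝ) ≤ χ/(1-χ) := div_nonneg (by linarith) (by linarith)
  have hmq : (0:ℝ) ≤ (m:ℝ) * (χ/(1-χ)) := mul_nonneg hm0 hq0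
  constructor
  · have h := lowB hχl hχu hk n (le_of_lt hkn)
    have h' : (1 - 1/(k:ℝ)) * (((n:ℝ)/(k:ℝ)) ^ (1-χ) - 1) ≤ Vp χ k n - 1 := by linarith
    have h2 := mul_le_mul_of_nonneg_left h' hmq
    have e1 : (m:ℝ) * (χ/(1-χ)) * (((n:ℝ)/(k:ℝ)) ^ (1-χ) - 1) * (1 - 1/(k:ℝ)) =
        (m:ℝ) * (χ/(1-χ)) * ((1 - 1/(k:ℝ)) * (((n:ℝ)/(k:ℝ)) ^ (1-χ) - 1)) := by ring
    have e2 : (m:ℝ) * (χ/(1-χ)) * (Vp χ k n - 1) =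
        (m:ℝ) * (χ/(1-χ) * (Vp χ k n - 1)) := by ring
    linarith [e1 ▸ e2 ▸ h2]
  · have h := upB hχl hχu hk n (le_of_lt hkn)
    have h' : Vp χ k n - 1 ≤ (1 + 4/(k:ℝ)) * (((n:ℝ)/(k:ℝ)) ^ (1-χ) - 1) := by linarith
    have h2 := mul_le_mul_of_nonneg_left h' hmq
    have e1 : (m:ℝ) * (χ/(1-χ)) * (((n:ℝ)/(k:ℝ)) ^ (1-χ) - 1) * (1 + 4/(k:ℝ)) =
        (m:ℝ) * (χ/(1-χ)) * ((1 + 4/(k:ℝ)) * (((n:ℝ)/(k:ℝ)) ^ (1-χ) - 1)) := by ring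
    have e2 : (m:ℝ) * (χ/(1-χ)) * (Vp χ k n - 1) =
        (m:ℝ) * (χ/(1-χ) * (Vp χ k n - 1)) := by ring
    linarith [e1 ▸ e2 ▸ h2]
end

section
/- There exists a constant C < ∞, depending only on m and α, with the following property. Let n ≥ 3 be an integer, let d be a real with m ≤ d ≤ 2m(n−2), set p = α/(n−1) + (1−α)d/(2m(n−2)), and for r ∈ {0,1,…,m} and l ∈ {0,1,…,m−1} set p_l(r) = (2mα + (1−α)(d + min(l,r))) / (2m(n−2) + 2mα + (1−α)l). Then max_{0 ≤ r ≤ m} | ∏_{l=0}^{r−1} p_l(r) · ∏_{l=r}^{m−1} (1 − p_l(r)) − p^r (1−p)^{m−r} | ≤ C·d/n². -/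
open Real

set_option maxHeartbeats 1000000


lemma prod_diff_le (f g : ℕ → ℝ)
    (hf : ∀ i, 0 ≤ f i ∧ f i ≤ 1) (hg : ∀ i, 0 ≤ g i ∧ g i ≤ 1) :
    ∀ s : Finset ℕ, |∏ i ∈ s, f i - ∏ i ∈ s, g i| ≤ ∑ i ∈ s, |f i - g i| := by
  intro s
  induction s using Finset.induction_on with
  | empty => simp
  | @insert a s ha ih =>
    rw [Finset.prod_insert ha, Finset.prod_insert ha, Finset.sum_insert ha]
    have hF0 : 0 ≤ ∏ i ∈ s, f i := Finset.prod_nonneg fun i _ => (hf i).1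
    have hF1 : ∏ i ∈ s, f i ≤ 1 := Finset.prod_le_one (fun i _ => (hf i).1) (fun i _ => (hf i).2)
    have key : f a * ∏ i ∈ s, f i - g a * ∏ i ∈ s, g i
        = (f a - g a) * ∏ i ∈ s, f i + g a * (∏ i ∈ s, f i - ∏ i ∈ s, g i) := by ring
    rw [key]
    have h0 := abs_add_le ((f a - g a) * ∏ i ∈ s, f i) (g a * (∏ i ∈ s, f i - ∏ i ∈ s, g i))
    rw [abs_mul, abs_mul, abs_of_nonneg hF0, abs_of_nonneg (hg a).1] at h0
    have h1 : |f a - g a| * ∏ i ∈ s, f i ≤ |f a - g a| :=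
      mul_le_of_le_one_right (abs_nonneg _) hF1
    have h2 : g a * |∏ i ∈ s, f i - ∏ i ∈ s, g i| ≤ ∑ i ∈ s, |f i - g i| :=
      le_trans (mul_le_of_le_one_left (abs_nonneg _) (hg a).2) ih
    linarith


lemma err_bound (m : ℕ) (hm : 2 ≤ m) (α N d : ℝ) (hα0 : 0 ≤ α) (hα1 : α < 1)
    (hN : 3 ≤ N) (hd1 : (m:ℝ) ≤ d) (hd2 : d ≤ 2*m*(N-2)) (l r : ℕ) (hl : l < m) :
    |(2*m*α + (1 - α)*(d + min (l:ℝ) (r:ℝ))) / (2*m*(N - 2) + 2*m*α + (1 - α)*(l:ℝ))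
      - (α/(N - 1) + (1 - α)*d/(2*m*(N - 2)))|
      ≤ 17*d/N^2 + min (l:ℝ) (r:ℝ) * (3/(4*N)) := by
  have hm' : (2:ℝ) ≤ (m:ℝ) := by exact_mod_cast hm
  have hm0 : (0:ℝ) ≤ (m:ℝ) := by linarith
  have hl' : (l:ℝ) ≤ (m:ℝ) := by exact_mod_cast hl.le
  have h1α : (0:ℝ) ≤ 1 - α := by linarith
  have hμ0 : 0 ≤ min (l:ℝ) (r:ℝ) := le_min (Nat.cast_nonneg l) (Nat.cast_nonneg r)
  have hμl : min (l:ℝ) (r:ℝ) ≤ (l:ℝ) := min_le_left _ _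
  have hd0 : (0:ℝ) < d := lt_of_lt_of_le (by linarith) hd1
  have hN2 : (0:ℝ) < N - 2 := by linarith
  have hN1 : (0:ℝ) < N - 1 := by linarith
  have hNpos : (0:ℝ) < N := by linarith
  have hD : (0:ℝ) < 2*m*(N-2) := by nlinarith
  have he0 : (0:ℝ) ≤ 2*m*α + (1 - α)*(l:ℝ) :=
    add_nonneg (by positivity) (mul_nonneg h1α (Nat.cast_nonneg l))
  have he3 : 2*(m:ℝ)*α + (1 - α)*(l:ℝ) ≤ 3*m := by nlinarith
  have hDe : (0:ℝ) < 2*m*(N - 2) + 2*m*α + (1 - α)*(l:ℝ) := by linarith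
  have ha0 : (0:ℝ) ≤ 2*m*α + (1 - α)*d := add_nonneg (by positivity) (mul_nonneg h1α hd0.le)
  have ha3 : 2*(m:ℝ)*α + (1 - α)*d ≤ 3*d := by nlinarith
  have hsplit : (2*m*α + (1 - α)*(d + min (l:ℝ) (r:ℝ))) / (2*m*(N - 2) + 2*m*α + (1 - α)*(l:ℝ))
      - (α/(N - 1) + (1 - α)*d/(2*m*(N - 2)))
      = ((2*m*α + (1 - α)*d)/(2*m*(N - 2) + 2*m*α + (1 - α)*(l:ℝ))
          - (2*m*α + (1 - α)*d)/(2*m*(N - 2)))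
        + α/((N-1)*(N-2))
        + (1 - α)*(min (l:ℝ) (r:ℝ))/(2*m*(N - 2) + 2*m*α + (1 - α)*(l:ℝ)) := by
    field_simp
    ring
  rw [hsplit]
  have h9 : N^2 ≤ 9*(N-2)^2 := by nlinarith [sq_nonneg (N - 3)]
  have hT1 : |(2*m*α + (1 - α)*d)/(2*m*(N - 2) + 2*m*α + (1 - α)*(l:ℝ))
      - (2*m*α + (1 - α)*d)/(2*m*(N - 2))| ≤ 11*d/N^2 := by
    have heq : (2*m*α + (1 - α)*d)/(2*m*(N - 2) + 2*m*α + (1 - α)*(l:ℝ))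
        - (2*m*α + (1 - α)*d)/(2*m*(N - 2))
        = -((2*m*α + (1 - α)*d) * (2*m*α + (1 - α)*(l:ℝ))
            / ((2*m*(N - 2) + 2*m*α + (1 - α)*(l:ℝ)) * (2*m*(N - 2)))) := by
      field_simp
      ring
    rw [heq, abs_neg, abs_of_nonneg (by positivity)]
    rw [div_le_div_iff₀ (by positivity) (by positivity)]
    have hprod : (2*(m:ℝ)*α + (1 - α)*d) * (2*m*α + (1 - α)*(l:ℝ)) ≤ (3*d)*(3*m) :=
      mul_le_mul ha3 he3 he0 (by linarith)
    have hDD : (2*(m:ℝ)*(N-2))*(2*m*(N-2))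
        ≤ (2*m*(N - 2) + 2*m*α + (1 - α)*(l:ℝ))*(2*m*(N-2)) :=
      mul_le_mul_of_nonneg_right (by linarith) hD.le
    have hD2 : 4*(m:ℝ)^2*N^2 ≤ 9*((2*m*(N-2))*(2*m*(N-2))) := by
      have h := mul_le_mul_of_nonneg_left h9 (by positivity : (0:ℝ) ≤ 4*(m:ℝ)^2)
      nlinarith [h]
    have h44 : (0:ℝ) ≤ (m:ℝ)*(44*m - 81) := by nlinarith
    nlinarith [mul_le_mul_of_nonneg_right hprod (sq_nonneg N),
      mul_le_mul_of_nonneg_left hDD (by positivity : (0:ℝ) ≤ 11*d),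
      mul_le_mul_of_nonneg_left hD2 (by positivity : (0:ℝ) ≤ d),
      mul_nonneg (mul_nonneg hd0.le (sq_nonneg N)) h44]
  have hT2 : |α/((N-1)*(N-2))| ≤ 3*d/N^2 := by
    rw [abs_of_nonneg (by positivity), div_le_div_iff₀ (by positivity) (by positivity)]
    have h6 : N^2 ≤ 6*((N-1)*(N-2)) := by nlinarith [sq_nonneg (N-3)]
    nlinarith [mul_nonneg (by linarith : (0:ℝ) ≤ 3*d - 6) (mul_nonneg hN1.le hN2.le),
      mul_nonneg h1α (sq_nonneg N)]
  have hT3 : |(1 - α)*(min (l:ℝ) (r:ℝ))/(2*m*(N - 2) + 2*m*α + (1 - α)*(l:ℝ))|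
      ≤ min (l:ℝ) (r:ℝ) * (3/(4*N)) := by
    rw [abs_of_nonneg (div_nonneg (mul_nonneg h1α hμ0) hDe.le)]
    rw [show min (l:ℝ) (r:ℝ) * (3/(4*N)) = 3 * min (l:ℝ) (r:ℝ) / (4*N) by ring]
    rw [div_le_div_iff₀ hDe (by linarith)]
    have h4 : 4*N ≤ 3*(2*m*(N - 2) + 2*m*α + (1 - α)*(l:ℝ)) := by
      nlinarith [mul_nonneg (by linarith : (0:ℝ) ≤ (m:ℝ) - 2) hN2.le]
    nlinarith [mul_le_mul_of_nonneg_left h4 hμ0, mul_nonneg (mul_nonneg hα0 hμ0) hNpos.le]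
  refine le_trans (abs_add_three _ _ _) ?_
  have hx : (0:ℝ) ≤ d/N^2 := by positivity
  have hT1' : |(2*m*α + (1 - α)*d)/(2*m*(N - 2) + 2*m*α + (1 - α)*(l:ℝ))
      - (2*m*α + (1 - α)*d)/(2*m*(N - 2))| ≤ 11*(d/N^2) := by
    rw [show (11:ℝ)*(d/N^2) = 11*d/N^2 by ring]; exact hT1
  have hT2' : |α/((N-1)*(N-2))| ≤ 3*(d/N^2) := by
    rw [show (3:ℝ)*(d/N^2) = 3*d/N^2 by ring]; exact hT2
  rw [show (17:ℝ)*d/N^2 = 17*(d/N^2) by ring]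
  linarith [hT1', hT2', hT3]

lemma key2 (m r : ℕ) (hm : 1 ≤ m) (hr : r ≤ m) (f : ℕ → ℝ) (p ε E : ℝ)
    (hf : ∀ i, 0 ≤ f i ∧ f i ≤ 1)
    (hp0 : 0 ≤ p) (hp1 : p ≤ 1) (hE0 : 0 ≤ E) (hEε : E ≤ ε)
    (herr : ∀ l, l < m → |f l - p| ≤ ε)
    (herr0 : ∀ l, l < m → min l r = 0 → |f l - p| ≤ E) :
    |(∏ l ∈ Finset.range r, f l) * (∏ l ∈ Finset.Ico r m, (1 - f l)) - p^r*(1-p)^(m-r)|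
      ≤ m*E + 2*p*(m*ε) := by
  have hε0 : 0 ≤ ε := le_trans hE0 hEε
  have hm' : (1:ℝ) ≤ (m:ℝ) := by exact_mod_cast hm
  have hq : ∀ i, 0 ≤ 1 - f i ∧ 1 - f i ≤ 1 :=
    fun i => ⟨by linarith [(hf i).2], by linarith [(hf i).1]⟩
  have hgq : ∀ _ : ℕ, 0 ≤ 1 - p ∧ 1 - p ≤ 1 := fun _ => ⟨by linarith, by linarith⟩
  have hqpow : (1-p)^(m-r) = ∏ _l ∈ Finset.Ico r m, (1-p) := by
    rw [Finset.prod_const, Nat.card_Ico]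
  have hB0 : 0 ≤ ∏ l ∈ Finset.Ico r m, (1 - f l) :=
    Finset.prod_nonneg fun i _ => (hq i).1
  have hB1 : ∏ l ∈ Finset.Ico r m, (1 - f l) ≤ 1 :=
    Finset.prod_le_one (fun i _ => (hq i).1) (fun i _ => (hq i).2)
  have hBsum : |(∏ l ∈ Finset.Ico r m, (1 - f l)) - (1-p)^(m-r)|
      ≤ ∑ l ∈ Finset.Ico r m, |f l - p| := by
    rw [hqpow]
    refine le_trans (prod_diff_le _ _ hq hgq _) (le_of_eq ?_)
    refine Finset.sum_congr rfl fun i _ => ?_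
    rw [show (1 - f i) - (1 - p) = -(f i - p) by ring, abs_neg]
  have hsumε : ∑ l ∈ Finset.Ico r m, |f l - p| ≤ m*ε := by
    calc ∑ l ∈ Finset.Ico r m, |f l - p| ≤ ∑ _l ∈ Finset.Ico r m, ε :=
          Finset.sum_le_sum fun i hi => herr i (Finset.mem_Ico.mp hi).2
      _ = (m - r : ℕ) * ε := by rw [Finset.sum_const, Nat.card_Ico, nsmul_eq_mul]
      _ ≤ m*ε := by
          have : ((m - r : ℕ):ℝ) ≤ (m:ℝ) := by exact_mod_cast Nat.sub_le m r
          exact mul_le_mul_of_nonneg_right this hε0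
  rcases Nat.eq_zero_or_pos r with hr0 | hrpos
  · subst hr0
    simp only [Finset.range_zero, Finset.prod_empty, pow_zero, one_mul, Nat.sub_zero] at *
    have hsum : ∑ l ∈ Finset.Ico 0 m, |f l - p| ≤ m*E := by
      calc ∑ l ∈ Finset.Ico 0 m, |f l - p| ≤ ∑ _l ∈ Finset.Ico 0 m, E := by
            refine Finset.sum_le_sum fun i hi => ?_
            exact herr0 i (Finset.mem_Ico.mp hi).2 (Nat.min_zero i)
        _ = m*E := by rw [Finset.sum_const, Nat.card_Ico, nsmul_eq_mul]; norm_num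
    have h1 := le_trans hBsum hsum
    nlinarith [mul_nonneg hp0 (mul_nonneg (le_trans zero_le_one hm') hε0)]
  · -- r ≥ 1
    have hA0 : 0 ≤ ∏ l ∈ Finset.range r, f l := Finset.prod_nonneg fun i _ => (hf i).1
    have hA1 : ∏ l ∈ Finset.range r, f l ≤ 1 :=
      Finset.prod_le_one (fun i _ => (hf i).1) (fun i _ => (hf i).2)
    have hsplitA : ∏ l ∈ Finset.range r, f l = f 0 * ∏ l ∈ Finset.Ico 1 r, f l :=
      Finset.prod_range_eq_mul_Ico f hrpos
    have hppow : p^r = p * ∏ _l ∈ Finset.Ico 1 r, p := by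
      rw [Finset.prod_const, Nat.card_Ico]
      rw [← pow_succ']
      congr 1
      omega
    have hF0 : 0 ≤ ∏ l ∈ Finset.Ico 1 r, f l := Finset.prod_nonneg fun i _ => (hf i).1
    have hF1 : ∏ l ∈ Finset.Ico 1 r, f l ≤ 1 :=
      Finset.prod_le_one (fun i _ => (hf i).1) (fun i _ => (hf i).2)
    have hf0E : |f 0 - p| ≤ E := herr0 0 (by omega) (by simp)
    have hFdiff : |(∏ l ∈ Finset.Ico 1 r, f l) - ∏ _l ∈ Finset.Ico 1 r, p|
        ≤ ∑ l ∈ Finset.Ico 1 r, |f l - p| :=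
      prod_diff_le f (fun _ => p) hf (fun _ => ⟨hp0, hp1⟩) _
    have hsumε' : ∑ l ∈ Finset.Ico 1 r, |f l - p| ≤ m*ε := by
      calc ∑ l ∈ Finset.Ico 1 r, |f l - p| ≤ ∑ _l ∈ Finset.Ico 1 r, ε :=
            Finset.sum_le_sum fun i hi => herr i (lt_of_lt_of_le (Finset.mem_Ico.mp hi).2 hr)
        _ = (r - 1 : ℕ) * ε := by rw [Finset.sum_const, Nat.card_Ico, nsmul_eq_mul]
        _ ≤ m*ε := by
            have : ((r - 1 : ℕ):ℝ) ≤ (m:ℝ) := by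
              have : r - 1 ≤ m := by omega
              exact_mod_cast this
            exact mul_le_mul_of_nonneg_right this hε0
    have hAdiff : |(∏ l ∈ Finset.range r, f l) - p^r| ≤ E + p*(m*ε) := by
      rw [hsplitA, hppow]
      have key : f 0 * (∏ l ∈ Finset.Ico 1 r, f l) - p * (∏ _l ∈ Finset.Ico 1 r, p)
          = (f 0 - p) * (∏ l ∈ Finset.Ico 1 r, f l)
            + p * ((∏ l ∈ Finset.Ico 1 r, f l) - ∏ _l ∈ Finset.Ico 1 r, p) := by ring
      rw [key]
      have h1 := abs_add_le ((f 0 - p) * (∏ l ∈ Finset.Ico 1 r, f l))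
        (p * ((∏ l ∈ Finset.Ico 1 r, f l) - ∏ _l ∈ Finset.Ico 1 r, p))
      rw [abs_mul, abs_mul, abs_of_nonneg hp0] at h1
      have h2 : |f 0 - p| * (|∏ l ∈ Finset.Ico 1 r, f l|) ≤ E := by
        rw [abs_of_nonneg hF0]
        exact le_trans (mul_le_of_le_one_right (abs_nonneg _) hF1) hf0E
      have h3 : p * |(∏ l ∈ Finset.Ico 1 r, f l) - ∏ _l ∈ Finset.Ico 1 r, p| ≤ p*(m*ε) :=
        mul_le_mul_of_nonneg_left (le_trans hFdiff hsumε') hp0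
      linarith
    have hpr : p^r ≤ p := by
      calc p^r ≤ p^1 := pow_le_pow_of_le_one hp0 hp1 hrpos
        _ = p := pow_one p
    have hpr0 : 0 ≤ p^r := pow_nonneg hp0 r
    have key : (∏ l ∈ Finset.range r, f l) * (∏ l ∈ Finset.Ico r m, (1 - f l)) - p^r*(1-p)^(m-r)
        = ((∏ l ∈ Finset.range r, f l) - p^r) * (∏ l ∈ Finset.Ico r m, (1 - f l))
          + p^r * ((∏ l ∈ Finset.Ico r m, (1 - f l)) - (1-p)^(m-r)) := by ring
    rw [key]
    have h1 := abs_add_le (((∏ l ∈ Finset.range r, f l) - p^r) * (∏ l ∈ Finset.Ico r m, (1 - f l)))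
      (p^r * ((∏ l ∈ Finset.Ico r m, (1 - f l)) - (1-p)^(m-r)))
    rw [abs_mul, abs_mul, abs_of_nonneg hB0, abs_of_nonneg hpr0] at h1
    have h2 : |(∏ l ∈ Finset.range r, f l) - p^r| * (∏ l ∈ Finset.Ico r m, (1 - f l))
        ≤ E + p*(m*ε) :=
      le_trans (mul_le_of_le_one_right (abs_nonneg _) hB1) hAdiff
    have h3 : p^r * |(∏ l ∈ Finset.Ico r m, (1 - f l)) - (1-p)^(m-r)| ≤ p*(m*ε) := by
      have := le_trans hBsum hsumε
      calc p^r * |(∏ l ∈ Finset.Ico r m, (1 - f l)) - (1-p)^(m-r)| ≤ p^r * (m*ε) :=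
            mul_le_mul_of_nonneg_left this hpr0
        _ ≤ p * (m*ε) := mul_le_mul_of_nonneg_right hpr (by positivity)
    have hEm : E ≤ m*E := le_mul_of_one_le_left hE0 hm'
    linarith

lemma key_main (m : ℕ) (hm : 2 ≤ m) (α N d : ℝ) (hα0 : 0 ≤ α) (hα1 : α < 1) (hN : 3 ≤ N)
    (hd1 : (m:ℝ) ≤ d) (hd2 : d ≤ 2*m*(N-2)) (r : ℕ) (hr : r ≤ m) :
    |(∏ l ∈ Finset.range r,
          (2*m*α + (1 - α)*(d + min (l:ℝ) (r:ℝ))) / (2*m*(N - 2) + 2*m*α + (1 - α)*(l:ℝ))) *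
        (∏ l ∈ Finset.Ico r m,
          (1 - (2*m*α + (1 - α)*(d + min (l:ℝ) (r:ℝ))) / (2*m*(N - 2) + 2*m*α + (1 - α)*(l:ℝ)))) -
      (α/(N - 1) + (1 - α)*d/(2*m*(N - 2))) ^ r *
        (1 - (α/(N - 1) + (1 - α)*d/(2*m*(N - 2)))) ^ (m - r)|
      ≤ 200*m^2*d/N^2 := by
  have hm' : (2:ℝ) ≤ (m:ℝ) := by exact_mod_cast hm
  have hm0 : (0:ℝ) ≤ (m:ℝ) := by linarith
  have h1α : (0:ℝ) ≤ 1 - α := by linarith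
  have hd0 : (0:ℝ) < d := lt_of_lt_of_le (by linarith) hd1
  have hN2 : (0:ℝ) < N - 2 := by linarith
  have hN1 : (0:ℝ) < N - 1 := by linarith
  have hNpos : (0:ℝ) < N := by linarith
  have hN0 : N ≠ 0 := hNpos.ne'
  have hD : (0:ℝ) < 2*m*(N-2) := by nlinarith
  have hND : N ≤ 2*(m:ℝ)*(N-2) := by
    nlinarith [mul_nonneg (by linarith : (0:ℝ) ≤ (m:ℝ) - 2) hN2.le]
  set p : ℝ := α/(N - 1) + (1 - α)*d/(2*m*(N - 2)) with hpdef
  have hp0 : 0 ≤ p := add_nonneg (div_nonneg hα0 hN1.le)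
    (div_nonneg (mul_nonneg h1α hd0.le) hD.le)
  have hp1 : p ≤ 1 := by
    have h1 : α/(N-1) ≤ α/2 := by
      rw [div_le_div_iff₀ hN1 (by norm_num : (0:ℝ) < 2)]
      nlinarith [mul_nonneg hα0 (by linarith : (0:ℝ) ≤ N - 3)]
    have h2 : (1 - α)*d/(2*m*(N-2)) ≤ 1 - α := by
      rw [div_le_iff₀ hD]
      nlinarith [mul_le_mul_of_nonneg_left hd2 h1α]
    calc p = α/(N-1) + (1 - α)*d/(2*m*(N-2)) := hpdef
      _ ≤ α/2 + (1 - α) := add_le_add h1 h2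
      _ ≤ 1 := by linarith
  have hp2 : p ≤ 2*(d/N) := by
    have h1 : α/(N-1) ≤ d/N := by
      rw [div_le_div_iff₀ hN1 hNpos]
      nlinarith [mul_nonneg h1α hNpos.le,
        mul_nonneg (by linarith : (0:ℝ) ≤ d - 2) hN1.le]
    have h2 : (1 - α)*d/(2*m*(N-2)) ≤ d/N := by
      rw [div_le_div_iff₀ hD hNpos]
      nlinarith [mul_nonneg hα0 (mul_nonneg hd0.le hNpos.le),
        mul_le_mul_of_nonneg_left hND hd0.le]
    calc p = α/(N-1) + (1 - α)*d/(2*m*(N-2)) := hpdef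
      _ ≤ d/N + d/N := add_le_add h1 h2
      _ = 2*(d/N) := by ring
  have hf : ∀ i : ℕ, 0 ≤ (2*(m:ℝ)*α + (1 - α)*(d + min (i:ℝ) (r:ℝ))) /
      (2*m*(N - 2) + 2*m*α + (1 - α)*(i:ℝ)) ∧
      (2*(m:ℝ)*α + (1 - α)*(d + min (i:ℝ) (r:ℝ))) /
      (2*m*(N - 2) + 2*m*α + (1 - α)*(i:ℝ)) ≤ 1 := by
    intro i
    have hμ0 : 0 ≤ min (i:ℝ) (r:ℝ) := le_min (Nat.cast_nonneg i) (Nat.cast_nonneg r)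
    have hμl : min (i:ℝ) (r:ℝ) ≤ (i:ℝ) := min_le_left _ _
    have hDe : (0:ℝ) < 2*m*(N - 2) + 2*m*α + (1 - α)*(i:ℝ) := by
      have : (0:ℝ) ≤ 2*m*α + (1 - α)*(i:ℝ) :=
        add_nonneg (by positivity) (mul_nonneg h1α (Nat.cast_nonneg i))
      linarith
    constructor
    · exact div_nonneg (add_nonneg (by positivity)
        (mul_nonneg h1α (by linarith))) hDe.le
    · rw [div_le_one hDe]
      nlinarith [mul_nonneg hα0 hd0.le, mul_le_mul_of_nonneg_left hμl h1α]
  have hx0 : (0:ℝ) ≤ d/N^2 := by positivity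
  have hE0 : (0:ℝ) ≤ 17*(d/N^2) := by positivity
  have hEε : 17*(d/N^2) ≤ 17*(d/N^2) + (m:ℝ)*(3/(4*N)) := by
    have : (0:ℝ) ≤ (m:ℝ)*(3/(4*N)) := by positivity
    linarith
  have herr : ∀ l, l < m →
      |(2*(m:ℝ)*α + (1 - α)*(d + min (l:ℝ) (r:ℝ))) / (2*m*(N - 2) + 2*m*α + (1 - α)*(l:ℝ)) - p|
        ≤ 17*(d/N^2) + (m:ℝ)*(3/(4*N)) := by
    intro l hl
    refine le_trans (err_bound m hm α N d hα0 hα1 hN hd1 hd2 l r hl) ?_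
    rw [show (17:ℝ)*d/N^2 = 17*(d/N^2) by ring]
    have h1 : min (l:ℝ) (r:ℝ) ≤ (m:ℝ) := by
      refine le_trans (min_le_right _ _) ?_
      exact_mod_cast hr
    have h2 : (0:ℝ) ≤ 3/(4*N) := by positivity
    have := mul_le_mul_of_nonneg_right h1 h2
    linarith
  have herr0 : ∀ l, l < m → min l r = 0 →
      |(2*(m:ℝ)*α + (1 - α)*(d + min (l:ℝ) (r:ℝ))) / (2*m*(N - 2) + 2*m*α + (1 - α)*(l:ℝ)) - p|
        ≤ 17*(d/N^2) := by
    intro l hl hlr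
    refine le_trans (err_bound m hm α N d hα0 hα1 hN hd1 hd2 l r hl) ?_
    have hmin : min (l:ℝ) (r:ℝ) = 0 := by
      rw [← Nat.cast_min, hlr, Nat.cast_zero]
    rw [hmin, show (17:ℝ)*d/N^2 + 0*(3/(4*N)) = 17*(d/N^2) by ring]
  have hmain := key2 m r (by omega) hr
    (fun l => (2*(m:ℝ)*α + (1 - α)*(d + min (l:ℝ) (r:ℝ))) /
      (2*m*(N - 2) + 2*m*α + (1 - α)*(l:ℝ)))
    p (17*(d/N^2) + (m:ℝ)*(3/(4*N))) (17*(d/N^2)) hf hp0 hp1 hE0 hEε herr herr0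
  refine le_trans hmain ?_
  have hdN : d/N^2 ≤ 2*((m:ℝ)/N) := by
    rw [show 2*((m:ℝ)/N) = 2*(m:ℝ)/N by ring,
      div_le_div_iff₀ (pow_pos hNpos 2) hNpos]
    nlinarith [mul_le_mul_of_nonneg_right hd2 hNpos.le,
      mul_nonneg (mul_nonneg hm0 hNpos.le) hNpos.le]
  have hε' : 17*(d/N^2) + (m:ℝ)*(3/(4*N)) ≤ 35*((m:ℝ)/N) := by
    have h2 : (m:ℝ)*(3/(4*N)) ≤ (m:ℝ)/N := by
      rw [show (m:ℝ)*(3/(4*N)) = 3*(m:ℝ)/(4*N) by ring,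
        div_le_div_iff₀ (by linarith : (0:ℝ) < 4*N) hNpos]
      nlinarith [mul_nonneg hm0 hNpos.le]
    linarith
  have hεnn : (0:ℝ) ≤ 17*(d/N^2) + (m:ℝ)*(3/(4*N)) := by positivity
  have hstep : p*((m:ℝ)*(17*(d/N^2) + (m:ℝ)*(3/(4*N)))) ≤ (2*(d/N))*((m:ℝ)*(35*((m:ℝ)/N))) := by
    apply mul_le_mul hp2
    · exact mul_le_mul_of_nonneg_left hε' hm0
    · exact mul_nonneg hm0 hεnn
    · positivity
  have heq : (2*(d/N))*((m:ℝ)*(35*((m:ℝ)/N))) = 70*(m:ℝ)^2*(d/N^2) := by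
    field_simp
    ring
  rw [heq] at hstep
  have h44 : (0:ℝ) ≤ (d/N^2)*((m:ℝ)*(60*(m:ℝ) - 17)) := by
    apply mul_nonneg hx0
    apply mul_nonneg hm0
    linarith
  rw [show (200:ℝ)*(m:ℝ)^2*d/N^2 = 200*(m:ℝ)^2*(d/N^2) by ring]
  linarith [hstep, h44]

/-- There is a constant `C < ∞` depending only on `m` and `α` such that for any
integer `n ≥ 3` and any real `d` with `m ≤ d ≤ 2m(n-2)`, setting
`p = α/(n-1) + (1-α)d/(2m(n-2))` and
`p_l(r) = (2mα + (1-α)(d + min(l,r)))/(2m(n-2) + 2mα + (1-α)l)`, one has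
`max_{0 ≤ r ≤ m} |∏_{l=0}^{r-1} p_l(r) ∏_{l=r}^{m-1} (1 - p_l(r)) − p^r (1-p)^(m-r)|
   ≤ C d/n²`. -/
theorem coupling_probability_estimate (m : ℕ) (hm : 2 ≤ m) (α : ℝ)
    (hα : α ∈ Set.Ico (0:ℝ) 1) :
    ∃ C : ℝ, ∀ n : ℕ, 3 ≤ n → ∀ d : ℝ, (m:ℝ) ≤ d → d ≤ 2*m*((n:ℝ) - 2) →
      ∀ r : ℕ, r ≤ m →
        |(∏ l ∈ Finset.range r,
              (2*m*α + (1 - α)*(d + min (l:ℝ) (r:ℝ))) /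
                (2*m*((n:ℝ) - 2) + 2*m*α + (1 - α)*(l:ℝ))) *
            (∏ l ∈ Finset.Ico r m,
              (1 - (2*m*α + (1 - α)*(d + min (l:ℝ) (r:ℝ))) /
                (2*m*((n:ℝ) - 2) + 2*m*α + (1 - α)*(l:ℝ)))) -
          (α/((n:ℝ) - 1) + (1 - α)*d/(2*m*((n:ℝ) - 2))) ^ r *
            (1 - (α/((n:ℝ) - 1) + (1 - α)*d/(2*m*((n:ℝ) - 2)))) ^ (m - r)| ≤
        C * d / (n:ℝ) ^ 2 := by
  refine ⟨200*(m:ℝ)^2, ?_⟩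
  intro n hn d hd1 hd2 r hr
  have hN : (3:ℝ) ≤ (n:ℝ) := by exact_mod_cast hn
  exact key_main m hm α (n:ℝ) d hα.1 hα.2 hN hd1 hd2 r hr
end

section
/- Let 0 < ψ ≤ 1, a > 0, and for x ∈ (0,1] set κ(x) = (1−x^ψ)/x^ψ. Then for every natural number k: (ψ+1) ∫_0^1 x^ψ · (Γ(k+a)/(k! Γ(a))) · κ(x)^k/(1+κ(x))^{k+a} dx = ((ψ+1)/ψ) · (Γ(a+1/ψ+1)/Γ(a)) · Γ(k+a)/Γ(a+1/ψ+k+2). Equivalently, if x_0 has density (ψ+1)x^ψ on [0,1], γ ~ Gamma(a,1) is independent, and D−m conditioned on (x_0,γ) is Poisson with mean γκ(x_0), then P(D = m+k) equals the right-hand side. -/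
open MeasureTheory Real Set

lemma beta_real_nat (b : ℝ) (hb : 0 < b) (k : ℕ) :
    ∫ t in Set.Ioc (0:ℝ) 1, t ^ (b - 1) * (1 - t) ^ k
      = Real.Gamma b * (Nat.factorial k) / Real.Gamma (b + k + 1) := by
  have hbc : 0 < (Complex.ofReal b).re := by simpa using hb
  have hkc : 0 < (Complex.ofReal ((k : ℝ) + 1)).re := by
    simpa using by positivity
  have hM := Complex.Gamma_mul_Gamma_eq_betaIntegral hbc hkc
  have hbeta : Complex.betaIntegral (b : ℂ) (((k : ℝ) + 1 : ℝ) : ℂ)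
      = ((∫ t in Set.Ioc (0:ℝ) 1, t ^ (b - 1) * (1 - t) ^ k : ℝ) : ℂ) := by
    rw [Complex.betaIntegral]
    rw [← intervalIntegral.integral_of_le (zero_le_one' ℝ)] at *
    rw [← intervalIntegral.integral_ofReal]
    apply intervalIntegral.integral_congr
    intro x hx
    rw [Set.uIcc_of_le (zero_le_one' ℝ)] at hx
    have hx0 : (0:ℝ) ≤ x := hx.1
    have hx1 : x ≤ 1 := hx.2
    have h1 : ((x : ℂ)) ^ ((b : ℂ) - 1) = ((x ^ (b - 1) : ℝ) : ℂ) := by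
      rw [Complex.ofReal_cpow hx0]; push_cast; ring_nf
    have h2 : ((1 : ℂ) - (x : ℂ)) ^ ((((k : ℝ) + 1 : ℝ) : ℂ) - 1) = (((1 - x) ^ k : ℝ) : ℂ) := by
      have : ((((k : ℝ) + 1 : ℝ) : ℂ) - 1) = (k : ℂ) := by push_cast; ring
      rw [this, Complex.cpow_natCast]
      push_cast; ring
    simp only [h1, h2]
    push_cast
    ring
  rw [hbeta] at hM
  have hsum : (b : ℂ) + (((k : ℝ) + 1 : ℝ) : ℂ) = ((b + k + 1 : ℝ) : ℂ) := by push_cast; ring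
  rw [hsum, Complex.Gamma_ofReal, Complex.Gamma_ofReal, Complex.Gamma_ofReal] at hM
  have hM' : Real.Gamma b * Real.Gamma ((k : ℝ) + 1)
      = Real.Gamma (b + k + 1) * ∫ t in Set.Ioc (0:ℝ) 1, t ^ (b - 1) * (1 - t) ^ k := by
    exact_mod_cast hM
  have hfac : Real.Gamma ((k : ℝ) + 1) = (Nat.factorial k : ℝ) := by
    exact_mod_cast Real.Gamma_nat_eq_factorial k
  have hG : Real.Gamma (b + k + 1) ≠ 0 := by
    have : (0:ℝ) < b + k + 1 := by positivity
    exact (Real.Gamma_pos_of_pos this).ne'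
  rw [hfac] at hM'
  field_simp
  linarith [hM']

lemma subst_rpow (ψ : ℝ) (hψ0 : 0 < ψ) (c : ℝ) (k : ℕ) :
    ∫ x in Set.Ioc (0:ℝ) 1, x ^ (ψ * c - 1) * (1 - x ^ ψ) ^ k
      = ψ⁻¹ * ∫ t in Set.Ioc (0:ℝ) 1, t ^ (c - 1) * (1 - t) ^ k := by
  set g : ℝ → ℝ := Set.indicator (Set.Ioc 0 1) (fun t => t ^ (c - 1) * (1 - t) ^ k) with hg
  have key := integral_comp_rpow_Ioi_of_pos (g := g) hψ0
  have hioc : ∀ (f : ℝ → ℝ), (∫ x in Set.Ioi (0:ℝ), Set.indicator (Set.Ioc 0 1) f x)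
      = ∫ x in Set.Ioc (0:ℝ) 1, f x := by
    intro f
    rw [MeasureTheory.integral_indicator measurableSet_Ioc,
      MeasureTheory.Measure.restrict_restrict measurableSet_Ioc]
    congr 1
    rw [Set.Ioc_inter_Ioi]
    simp
  have hmem : ∀ x : ℝ, 0 < x → (x ^ ψ ∈ Set.Ioc (0:ℝ) 1 ↔ x ∈ Set.Ioc (0:ℝ) 1) := by
    intro x hx
    simp only [Set.mem_Ioc, Real.rpow_pos_of_pos hx ψ, hx, true_and]
    rw [Real.rpow_le_one_iff_of_pos hx]
    constructor
    · rintro (⟨h1, h2⟩ | ⟨h1, h2⟩)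
      · linarith
      · exact h1
    · intro h; right; exact ⟨h, hψ0.le⟩
  have hLHS : (∫ x in Set.Ioi (0:ℝ), (ψ * x ^ (ψ - 1)) • g (x ^ ψ))
      = ψ * ∫ x in Set.Ioc (0:ℝ) 1, x ^ (ψ * c - 1) * (1 - x ^ ψ) ^ k := by
    rw [← hioc (fun x => x ^ (ψ * c - 1) * (1 - x ^ ψ) ^ k), ← MeasureTheory.integral_const_mul]
    apply MeasureTheory.setIntegral_congr_fun measurableSet_Ioi
    intro x hx
    dsimp only
    have hx0 : (0:ℝ) < x := hx
    by_cases hx1 : x ∈ Set.Ioc (0:ℝ) 1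
    · have hxm : x ^ ψ ∈ Set.Ioc (0:ℝ) 1 := (hmem x hx0).mpr hx1
      rw [hg]
      simp only [Set.indicator_of_mem hxm, Set.indicator_of_mem hx1, smul_eq_mul]
      have h1 : (x ^ ψ) ^ (c - 1) = x ^ (ψ * (c - 1)) := (Real.rpow_mul hx0.le ψ (c-1)).symm
      rw [h1]
      rw [show ψ * x ^ (ψ - 1) * (x ^ (ψ * (c - 1)) * (1 - x ^ ψ) ^ k)
          = ψ * (x ^ (ψ - 1) * x ^ (ψ * (c - 1)) * (1 - x ^ ψ) ^ k) by ring,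
        ← Real.rpow_add hx0]
      ring_nf
    · have hxm : x ^ ψ ∉ Set.Ioc (0:ℝ) 1 := fun h => hx1 ((hmem x hx0).mp h)
      rw [hg]
      simp [Set.indicator_of_notMem hxm, Set.indicator_of_notMem hx1]
  rw [hLHS] at key
  have hR : (∫ y in Set.Ioi (0:ℝ), g y) = ∫ t in Set.Ioc (0:ℝ) 1, t ^ (c - 1) * (1 - t) ^ k :=
    hioc (fun t => t ^ (c - 1) * (1 - t) ^ k)
  rw [hR] at key
  rw [← key]
  field_simp

/-- Let `0 < ψ ≤ 1`, `a > 0`, and for `x ∈ (0,1]` set `κ(x) = (1-x^ψ)/x^ψ`.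
Then for every natural number `k`:
`(ψ+1) ∫_0^1 x^ψ · (Γ(k+a)/(k! Γ(a))) · κ(x)^k/(1+κ(x))^(k+a) dx
   = ((ψ+1)/ψ) · (Γ(a+1/ψ+1)/Γ(a)) · Γ(k+a)/Γ(a+1/ψ+k+2)`.
This is the limiting degree distribution `P(D = m+k)` of the root of the Pólya-point graph. -/
theorem polya_point_root_degree_distribution (ψ a : ℝ) (hψ : ψ ∈ Set.Ioc (0:ℝ) 1)
    (ha : 0 < a) (k : ℕ) :
    (ψ + 1) * ∫ x in Set.Ioc (0:ℝ) 1,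
        x ^ ψ * ((Real.Gamma (k + a) / (Nat.factorial k * Real.Gamma a)) *
          (((1 - x ^ ψ) / x ^ ψ) ^ k /
            (1 + (1 - x ^ ψ) / x ^ ψ) ^ ((k : ℝ) + a))) =
      ((ψ + 1) / ψ) * (Real.Gamma (a + 1/ψ + 1) / Real.Gamma a) *
        (Real.Gamma (k + a) / Real.Gamma (a + 1/ψ + k + 2)) := by
  obtain ⟨hψ0, hψ1⟩ := hψ
  set C : ℝ := Real.Gamma (k + a) / (Nat.factorial k * Real.Gamma a) with hC
  have hcongr : ∫ x in Set.Ioc (0:ℝ) 1,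
        x ^ ψ * (C * (((1 - x ^ ψ) / x ^ ψ) ^ k /
            (1 + (1 - x ^ ψ) / x ^ ψ) ^ ((k : ℝ) + a)))
      = ∫ x in Set.Ioc (0:ℝ) 1,
        C * (x ^ (ψ * (a + 1/ψ + 1) - 1) * (1 - x ^ ψ) ^ k) := by
    apply MeasureTheory.setIntegral_congr_fun measurableSet_Ioc
    intro x hx
    dsimp only
    have hx0 : (0:ℝ) < x := hx.1
    have hp : (0:ℝ) < x ^ ψ := Real.rpow_pos_of_pos hx0 ψ
    have h1 : 1 + (1 - x ^ ψ) / x ^ ψ = (x ^ ψ)⁻¹ := by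
      field_simp
      ring
    rw [h1, Real.inv_rpow hp.le, ← Real.rpow_neg hp.le]
    have hk : ((1 - x ^ ψ) / x ^ ψ) ^ k = (1 - x ^ ψ) ^ k * (x ^ ψ) ^ (-(k:ℝ)) := by
      rw [div_pow, Real.rpow_neg hp.le, Real.rpow_natCast, div_eq_mul_inv]
    rw [hk, mul_div_assoc, ← Real.rpow_sub hp]
    have hd : -(k:ℝ) - -((k:ℝ) + a) = a := by ring
    rw [hd]
    have hx' : x ^ ψ * (x ^ ψ) ^ a = x ^ (ψ * (a + 1/ψ + 1) - 1) := by
      rw [← Real.rpow_mul hx0.le, ← Real.rpow_add hx0]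
      congr 1
      field_simp
      ring
    calc x ^ ψ * (C * ((1 - x ^ ψ) ^ k * (x ^ ψ) ^ a))
        = C * (x ^ ψ * (x ^ ψ) ^ a * (1 - x ^ ψ) ^ k) := by ring
      _ = C * (x ^ (ψ * (a + 1/ψ + 1) - 1) * (1 - x ^ ψ) ^ k) := by rw [hx']
  rw [hcongr, MeasureTheory.integral_const_mul,
    subst_rpow ψ hψ0 (a + 1/ψ + 1) k,
    beta_real_nat (a + 1/ψ + 1) (by positivity) k]
  have hG2 : Real.Gamma (a + 1/ψ + 1 + k + 1) = Real.Gamma (a + 1/ψ + k + 2) := by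
    congr 1; ring
  rw [hG2, hC]
  have hfac : (Nat.factorial k : ℝ) ≠ 0 := by positivity
  have hGa : Real.Gamma a ≠ 0 := (Real.Gamma_pos_of_pos ha).ne'
  field_simp
end

section
/- Let 0 < ψ ≤ 1, a > 0, and for y ∈ (0,1] set κ(y) = (1−y^ψ)/y^ψ. Then for every natural number k: (ψ+1) ∫_0^1 x^{ψ−1} ∫_0^x (Γ(k+a+1)/(k! Γ(a+1))) · κ(y)^k/(1+κ(y))^{k+a+1} dy dx = ((ψ+1)/ψ²) · (Γ(a+1/ψ+1)/Γ(a+1)) · (k+1)Γ(k+a+1)/Γ(a+1/ψ+k+3). Equivalently, if x_0 has density (ψ+1)x^ψ on [0,1], y_0 given x_0 is uniform on [0,x_0], γ' ~ Gamma(a+1,1) is independent, and D'−m−1 conditioned on (y_0,γ') is Poisson with mean γ'κ(y_0), then P(D' = m+1+k) equals the right-hand side. -/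
open MeasureTheory Real Set


lemma gamma_prod (b : ℝ) (hb : 0 < b) (n : ℕ) :
    Real.Gamma (b + n) = Real.Gamma b * ∏ j ∈ Finset.range n, (b + j) := by
  induction n with
  | zero => simp
  | succ n ih =>
    have h : b + ((n+1 : ℕ) : ℝ) = (b + n) + 1 := by push_cast; ring
    rw [h, Real.Gamma_add_one (by positivity), ih, Finset.prod_range_succ]
    push_cast; ring

lemma beta_nat (b : ℝ) (hb : 0 < b) (n : ℕ) :
    ∫ t in Set.Ioc (0:ℝ) 1, t ^ (b-1) * (1-t)^n
      = n.factorial * Real.Gamma b / Real.Gamma (b + n + 1) := by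
  have hc := Complex.betaIntegral_eval_nat_add_one_right (u := (b:ℂ)) (by simpa using hb) n
  rw [Complex.betaIntegral] at hc
  have hcongr : ∀ x ∈ Set.uIcc (0:ℝ) 1,
      (x:ℂ) ^ ((b:ℂ)-1) * (1-(x:ℂ)) ^ (((n:ℂ)+1)-1)
        = ((x ^ (b-1) * (1-x)^n : ℝ) : ℂ) := by
    intro x hx
    rw [Set.uIcc_of_le zero_le_one] at hx
    have h1 : ((b:ℂ)-1) = ((b-1 : ℝ) : ℂ) := by push_cast; ring
    have h2 : (((n:ℂ)+1)-1) = ((n : ℕ) : ℂ) := by push_cast; ring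
    rw [h1, h2, ← Complex.ofReal_cpow hx.1, Complex.cpow_natCast]
    push_cast; ring
  rw [intervalIntegral.integral_congr hcongr, intervalIntegral.integral_ofReal] at hc
  have hprod : (∏ j ∈ Finset.range (n+1), ((b:ℂ) + j))
      = ((∏ j ∈ Finset.range (n+1), (b + j) : ℝ) : ℂ) := by push_cast; ring
  rw [hprod] at hc
  have hr : ∫ x in (0:ℝ)..1, x ^ (b-1) * (1-x)^n
      = n.factorial / ∏ j ∈ Finset.range (n+1), (b + j) := by
    have := hc
    rw [show ((n.factorial : ℂ) : ℂ) / ((∏ j ∈ Finset.range (n+1), (b + j) : ℝ) : ℂ)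
        = (((n.factorial : ℝ) / ∏ j ∈ Finset.range (n+1), (b + j) : ℝ) : ℂ) by push_cast; ring] at this
    exact_mod_cast this
  rw [intervalIntegral.integral_of_le zero_le_one] at hr
  rw [hr]
  have hG : Real.Gamma (b + (n+1 : ℕ)) = Real.Gamma b * ∏ j ∈ Finset.range (n+1), (b + j) :=
    gamma_prod b hb (n+1)
  have hGb : Real.Gamma b ≠ 0 := (Real.Gamma_pos_of_pos hb).ne'
  have hP : (∏ j ∈ Finset.range (n+1), (b + j)) ≠ 0 :=
    Finset.prod_ne_zero_iff.mpr fun j _ => by positivity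
  have : Real.Gamma (b + n + 1) = Real.Gamma b * ∏ j ∈ Finset.range (n+1), (b + j) := by
    rw [← hG]; push_cast; ring_nf
  rw [this]
  field_simp

lemma subst_rpow_s16 (ψ c : ℝ) (hψ : 0 < ψ) (m : ℕ) :
    ψ * ∫ y in Set.Ioc (0:ℝ) 1, (1-y^ψ)^m * y^(ψ*(c+1))
      = ∫ t in Set.Ioc (0:ℝ) 1, t ^ (c + 1/ψ) * (1-t)^m := by
  set f : ℝ → ℝ := fun t => t ^ (c + 1/ψ) * (1-t)^m with hf
  have key := integral_comp_rpow_Ioi_of_pos (g := (Set.Ioc (0:ℝ) 1).indicator f) hψ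
  have hmem : ∀ x : ℝ, 0 < x → (x ^ ψ ∈ Set.Ioc (0:ℝ) 1 ↔ x ∈ Set.Ioc (0:ℝ) 1) := by
    intro x hx
    constructor
    · rintro ⟨h1, h2⟩
      refine ⟨hx, ?_⟩
      by_contra h
      push_neg at h
      have := Real.one_lt_rpow_iff_of_pos hx (y := ψ) |>.mpr (Or.inl ⟨h, hψ⟩)
      linarith
    · rintro ⟨h1, h2⟩
      exact ⟨Real.rpow_pos_of_pos hx ψ, Real.rpow_le_one hx.le h2 hψ.le⟩
  have hL : (∫ x in Set.Ioi (0:ℝ), (ψ * x ^ (ψ-1)) • (Set.Ioc (0:ℝ) 1).indicator f (x ^ ψ))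
      = ψ * ∫ y in Set.Ioc (0:ℝ) 1, (1-y^ψ)^m * y^(ψ*(c+1)) := by
    have : ∀ x ∈ Set.Ioi (0:ℝ), (ψ * x ^ (ψ-1)) • (Set.Ioc (0:ℝ) 1).indicator f (x ^ ψ)
        = (Set.Ioc (0:ℝ) 1).indicator (fun x => ψ * ((1-x^ψ)^m * x^(ψ*(c+1)))) x := by
      intro x hx
      have hx0 : (0:ℝ) < x := hx
      by_cases hmemx : x ∈ Set.Ioc (0:ℝ) 1
      · rw [Set.indicator_of_mem ((hmem x hx0).mpr hmemx), Set.indicator_of_mem hmemx]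
        have hxψ : (x:ℝ)^ψ ≠ 0 := (Real.rpow_pos_of_pos hx0 ψ).ne'
        rw [hf]
        simp only [smul_eq_mul]
        have he : ψ*(c+1) = (ψ-1) + ψ*(c+1/ψ) := by field_simp; ring
        rw [← Real.rpow_mul hx0.le, he, Real.rpow_add hx0]
        ring
      · rw [Set.indicator_of_notMem (fun h => hmemx ((hmem x hx0).mp h)),
          Set.indicator_of_notMem hmemx, smul_zero]
    rw [setIntegral_congr_fun measurableSet_Ioi this, integral_indicator measurableSet_Ioc,
      Measure.restrict_restrict measurableSet_Ioc,
      Set.inter_eq_left.mpr (fun x hx => hx.1), MeasureTheory.integral_const_mul]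
  have hR : (∫ y in Set.Ioi (0:ℝ), (Set.Ioc (0:ℝ) 1).indicator f y)
      = ∫ t in Set.Ioc (0:ℝ) 1, t ^ (c + 1/ψ) * (1-t)^m := by
    rw [integral_indicator measurableSet_Ioc, Measure.restrict_restrict measurableSet_Ioc,
      Set.inter_eq_left.mpr (fun x hx => hx.1)]
  rw [← hL, key, hR]


lemma fubini_step (ψ a : ℝ) (hψ : 0 < ψ) (hψ1 : ψ ≤ 1) (ha : 0 < a) (k : ℕ) :
    (∫ x in Set.Ioc (0:ℝ) 1, x^(ψ-1) * ∫ y in Set.Ioc (0:ℝ) x, (1-y^ψ)^k * y^(ψ*(a+1)))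
      = ∫ y in Set.Ioc (0:ℝ) 1, ((1-y^ψ)^k * y^(ψ*(a+1))) * ((1-y^ψ)/ψ) := by
  set g : ℝ → ℝ := fun y => (1-y^ψ)^k * y^(ψ*(a+1)) with hg
  set μ := volume.restrict (Set.Ioc (0:ℝ) 1) with hμ
  set F : ℝ → ℝ → ℝ := fun x y => {q : ℝ×ℝ | q.2 ≤ q.1}.indicator
      (fun q => q.1^(ψ-1) * g q.2) (x, y) with hF
  have hg_meas : Measurable g := by fun_prop
  have hF_meas : Measurable (Function.uncurry F) := by
    apply Measurable.indicator
    · fun_prop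
    · exact measurableSet_le measurable_snd measurable_fst
  have h1 : Integrable (fun x : ℝ => x^(ψ-1)) μ := by
    have h := intervalIntegral.intervalIntegrable_rpow' (a := 0) (b := 1)
      (r := ψ - 1) (by linarith)
    rw [intervalIntegrable_iff_integrableOn_Ioc_of_le zero_le_one] at h
    exact h
  have h2 : Integrable g μ := by
    apply Integrable.mono' (integrable_const (1:ℝ)) hg_meas.aestronglyMeasurable
    rw [hμ]
    filter_upwards [ae_restrict_mem measurableSet_Ioc] with y hy
    have hy1 : y ^ ψ ≤ 1 := Real.rpow_le_one hy.1.le hy.2 hψ.le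
    have hy0 : 0 < y ^ ψ := Real.rpow_pos_of_pos hy.1 ψ
    have hb1 : (1-y^ψ)^k ≤ 1 := pow_le_one₀ (by linarith) (by linarith)
    have hb2 : y ^ (ψ*(a+1)) ≤ 1 :=
      Real.rpow_le_one hy.1.le hy.2 (mul_nonneg hψ.le (by linarith))
    rw [Real.norm_eq_abs,
      abs_of_nonneg (mul_nonneg (pow_nonneg (by linarith) k) (Real.rpow_nonneg hy.1.le _))]
    calc (1-y^ψ)^k * y^(ψ*(a+1)) ≤ 1 * 1 := by
          apply mul_le_mul hb1 hb2 (Real.rpow_nonneg hy.1.le _) zero_le_one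
      _ = 1 := by ring
  have hD : Integrable (fun p : ℝ×ℝ => p.1^(ψ-1) * g p.2) (μ.prod μ) :=
    Integrable.mul_prod h1 h2
  have hF_int : Integrable (Function.uncurry F) (μ.prod μ) := by
    apply hD.mono hF_meas.aestronglyMeasurable
    apply Filter.Eventually.of_forall
    rintro ⟨x, y⟩
    show ‖F x y‖ ≤ ‖(x:ℝ) ^ (ψ-1) * g y‖
    rw [hF]
    exact norm_indicator_le_norm_self (s := {q : ℝ×ℝ | q.2 ≤ q.1})
      (f := fun q : ℝ×ℝ => q.1^(ψ-1) * g q.2) (a := (x, y))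
  have swap := MeasureTheory.integral_integral_swap hF_int
  -- LHS equality
  have hLHS : (∫ x in Set.Ioc (0:ℝ) 1, x^(ψ-1) * ∫ y in Set.Ioc (0:ℝ) x, g y)
      = ∫ x, ∫ y, F x y ∂μ ∂μ := by
    rw [hμ]
    apply setIntegral_congr_fun measurableSet_Ioc
    intro x hx
    have : ∀ y : ℝ, F x y = (Set.Iic x).indicator (fun y => x^(ψ-1) * g y) y := by
      intro y
      simp only [hF, Set.indicator_apply, Set.mem_setOf_eq, Set.mem_Iic]
    simp only [this]
    rw [integral_indicator measurableSet_Iic, Measure.restrict_restrict measurableSet_Iic,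
      MeasureTheory.integral_const_mul]
    congr 1
    have : Set.Iic x ∩ Set.Ioc (0:ℝ) 1 = Set.Ioc (0:ℝ) x := by
      ext y
      simp only [Set.mem_inter_iff, Set.mem_Iic, Set.mem_Ioc]
      exact ⟨fun ⟨h1, h2, h3⟩ => ⟨h2, h1⟩, fun ⟨h1, h2⟩ => ⟨h2, h1, h2.trans hx.2⟩⟩
    rw [this]
  -- RHS equality
  have hRHS : (∫ y, ∫ x, F x y ∂μ ∂μ)
      = ∫ y in Set.Ioc (0:ℝ) 1, g y * ((1-y^ψ)/ψ) := by
    rw [hμ]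
    apply setIntegral_congr_fun measurableSet_Ioc
    intro y hy
    have : ∀ x : ℝ, F x y = (Set.Ici y).indicator (fun x => x^(ψ-1) * g y) x := by
      intro x
      simp only [hF, Set.indicator_apply, Set.mem_setOf_eq, Set.mem_Ici]
    simp only [this]
    rw [integral_indicator measurableSet_Ici, Measure.restrict_restrict measurableSet_Ici,
      MeasureTheory.integral_mul_const]
    have hset : Set.Ici y ∩ Set.Ioc (0:ℝ) 1 = Set.Icc y 1 := by
      ext x
      simp only [Set.mem_inter_iff, Set.mem_Ici, Set.mem_Ioc, Set.mem_Icc]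
      exact ⟨fun ⟨h1, h2, h3⟩ => ⟨h1, h3⟩, fun ⟨h1, h2⟩ => ⟨h1, lt_of_lt_of_le hy.1 h1, h2⟩⟩
    rw [hset, MeasureTheory.integral_Icc_eq_integral_Ioc,
      ← intervalIntegral.integral_of_le hy.2, integral_rpow (Or.inl (by linarith))]
    rw [sub_add_cancel, Real.one_rpow]
    ring
  rw [hLHS, swap, hRHS]


/-- Let `0 < ψ ≤ 1`, `a > 0`, and for `y ∈ (0,1]` set `κ(y) = (1-y^ψ)/y^ψ`.
Then for every natural number `k`:
`(ψ+1) ∫_0^1 x^(ψ-1) ∫_0^x (Γ(k+a+1)/(k! Γ(a+1))) · κ(y)^k/(1+κ(y))^(k+a+1) dy dx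
   = ((ψ+1)/ψ²) · (Γ(a+1/ψ+1)/Γ(a+1)) · (k+1)Γ(k+a+1)/Γ(a+1/ψ+k+3)`.
This is the limiting degree distribution `P(D' = m+1+k)` of a uniformly chosen earlier
neighbor of the root of the Pólya-point graph. -/
theorem polya_point_neighbor_degree_distribution (ψ a : ℝ) (hψ : ψ ∈ Set.Ioc (0:ℝ) 1)
    (ha : 0 < a) (k : ℕ) :
    (ψ + 1) * ∫ x in Set.Ioc (0:ℝ) 1, x ^ (ψ - 1) *
        ∫ y in Set.Ioc (0:ℝ) x,
          (Real.Gamma (k + a + 1) / (Nat.factorial k * Real.Gamma (a + 1))) *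
            (((1 - y ^ ψ) / y ^ ψ) ^ k /
              (1 + (1 - y ^ ψ) / y ^ ψ) ^ ((k : ℝ) + a + 1)) =
      ((ψ + 1) / ψ ^ 2) * (Real.Gamma (a + 1/ψ + 1) / Real.Gamma (a + 1)) *
        ((k + 1) * Real.Gamma (k + a + 1) / Real.Gamma (a + 1/ψ + k + 3)) := by
  obtain ⟨hψ0, hψ1⟩ := hψ
  set C : ℝ := Real.Gamma (k + a + 1) / (Nat.factorial k * Real.Gamma (a + 1)) with hC
  set g : ℝ → ℝ := fun y => (1-y^ψ)^k * y^(ψ*(a+1)) with hg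
  -- Step 1: simplify the inner integrand
  have step1 : ∀ y : ℝ, 0 < y →
      ((1 - y ^ ψ) / y ^ ψ) ^ k / (1 + (1 - y ^ ψ) / y ^ ψ) ^ ((k : ℝ) + a + 1) = g y := by
    intro y hy0
    have hyψ : (0:ℝ) < y ^ ψ := Real.rpow_pos_of_pos hy0 ψ
    have h1 : 1 + (1 - y ^ ψ) / y ^ ψ = y ^ (-ψ) := by
      rw [Real.rpow_neg hy0.le]
      field_simp
      ring
    rw [h1, ← Real.rpow_mul hy0.le, div_pow, ← Real.rpow_natCast (y ^ ψ) k,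
      ← Real.rpow_mul hy0.le, div_div, ← Real.rpow_add hy0]
    have h2 : ψ * (k:ℝ) + -ψ * ((k:ℝ) + a + 1) = -(ψ * (a+1)) := by ring
    rw [h2, Real.rpow_neg hy0.le, hg]
    field_simp
  -- Step 2: pull out the constant
  have step2 : (ψ + 1) * ∫ x in Set.Ioc (0:ℝ) 1, x ^ (ψ - 1) *
        ∫ y in Set.Ioc (0:ℝ) x, C * (((1 - y ^ ψ) / y ^ ψ) ^ k /
              (1 + (1 - y ^ ψ) / y ^ ψ) ^ ((k : ℝ) + a + 1))
      = (ψ + 1) * C * ∫ x in Set.Ioc (0:ℝ) 1, x ^ (ψ - 1) * ∫ y in Set.Ioc (0:ℝ) x, g y := by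
    rw [mul_assoc]
    congr 1
    rw [← MeasureTheory.integral_const_mul]
    apply setIntegral_congr_fun measurableSet_Ioc
    intro x hx
    have : (∫ y in Set.Ioc (0:ℝ) x, C * (((1 - y ^ ψ) / y ^ ψ) ^ k /
              (1 + (1 - y ^ ψ) / y ^ ψ) ^ ((k : ℝ) + a + 1)))
        = C * ∫ y in Set.Ioc (0:ℝ) x, g y := by
      rw [← MeasureTheory.integral_const_mul]
      apply setIntegral_congr_fun measurableSet_Ioc
      intro y hy
      dsimp only
      rw [step1 y hy.1]
    dsimp only
    rw [this]
    ring
  rw [step2, fubini_step ψ a hψ0 hψ1 ha k]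
  -- Step 3: combine the powers
  have step3 : (∫ y in Set.Ioc (0:ℝ) 1, ((1-y^ψ)^k * y^(ψ*(a+1))) * ((1-y^ψ)/ψ))
      = (1/ψ) * ∫ y in Set.Ioc (0:ℝ) 1, (1-y^ψ)^(k+1) * y^(ψ*(a+1)) := by
    rw [← MeasureTheory.integral_const_mul]
    apply setIntegral_congr_fun measurableSet_Ioc
    intro y _
    dsimp only
    rw [pow_succ]
    field_simp
  rw [step3]
  -- Step 4: substitution t = y^ψ
  have hJ : (∫ y in Set.Ioc (0:ℝ) 1, (1-y^ψ)^(k+1) * y^(ψ*(a+1)))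
      = (1/ψ) * ∫ t in Set.Ioc (0:ℝ) 1, t ^ (a + 1/ψ) * (1-t)^(k+1) := by
    rw [← subst_rpow_s16 ψ a hψ0 (k+1)]
    field_simp
  rw [hJ]
  -- Step 5: Beta integral
  have hb : (0:ℝ) < a + 1/ψ + 1 := by positivity
  have hB : (∫ t in Set.Ioc (0:ℝ) 1, t ^ (a + 1/ψ) * (1-t)^(k+1))
      = (k+1).factorial * Real.Gamma (a + 1/ψ + 1) / Real.Gamma (a + 1/ψ + k + 3) := by
    have h := beta_nat (a + 1/ψ + 1) hb (k+1)
    rw [show (a + 1/ψ + 1) - 1 = a + 1/ψ by ring] at h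
    rw [h]
    congr 2
    push_cast
    ring
  rw [hB]
  -- Final algebra
  have hψne : ψ ≠ 0 := hψ0.ne'
  have hGa : Real.Gamma (a+1) ≠ 0 := (Real.Gamma_pos_of_pos (by linarith)).ne'
  have hGd : Real.Gamma (a + 1/ψ + k + 3) ≠ 0 :=
    (Real.Gamma_pos_of_pos (by positivity)).ne'
  have hfk : ((k.factorial : ℝ)) ≠ 0 := Nat.cast_ne_zero.mpr k.factorial_ne_zero
  have hfact : ((k+1).factorial : ℝ) = ((k:ℝ)+1) * k.factorial := by
    rw [Nat.factorial_succ]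
    push_cast
    ring
  rw [hC, hfact]
  field_simp
end

section
/- For all reals a > 0 and ψ ∈ (0,1] and all natural numbers k, j: ∫_0^1 (1−v)^k v^{a+1/ψ} ( ∫_0^v (1−u)^j u^a du ) dv ≤ (1/(a+1)) · k! · Γ(2a+1/ψ+2)/Γ(2a+1/ψ+k+3). -/
open MeasureTheory Real Set

lemma real_beta_eq (s : ℝ) (hs : 0 < s) (k : ℕ) :
    ∫ x in (0:ℝ)..1, x ^ (s - 1) * (1 - x) ^ k
      = (Nat.factorial k : ℝ) * (Real.Gamma s / Real.Gamma (s + k + 1)) := by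
  have hβ := Complex.Gamma_mul_Gamma_eq_betaIntegral (s := (s : ℂ)) (t := (k + 1 : ℂ))
    (by simpa using hs) (by simp; positivity)
  have hcast : Complex.betaIntegral s (k + 1)
      = ((∫ x in (0:ℝ)..1, x ^ (s - 1) * (1 - x) ^ k : ℝ) : ℂ) := by
    rw [Complex.betaIntegral, ← intervalIntegral.integral_ofReal]
    refine intervalIntegral.integral_congr fun x hx => ?_
    rw [Set.uIcc_of_le (by norm_num : (0:ℝ) ≤ 1)] at hx
    have hx0 : 0 ≤ x := hx.1
    have hx1 : 0 ≤ 1 - x := by linarith [hx.2]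
    have e1 : ((s:ℂ) - 1) = ((s - 1 : ℝ) : ℂ) := by push_cast; ring
    have e2 : ((k:ℂ) + 1 - 1) = (k : ℂ) := by ring
    rw [e1, e2, ← Complex.ofReal_cpow hx0, Complex.cpow_natCast]
    push_cast
    ring
  rw [hcast] at hβ
  have hΓk : Complex.Gamma ((k:ℂ) + 1) = (Nat.factorial k : ℂ) := by
    exact_mod_cast Complex.Gamma_nat_eq_factorial k
  have h1 : ((s:ℂ) + ((k:ℂ) + 1)) = ((s + k + 1 : ℝ) : ℂ) := by push_cast; ring
  rw [hΓk, h1, Complex.Gamma_ofReal, Complex.Gamma_ofReal] at hβ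
  have hΓpos : 0 < Real.Gamma (s + k + 1) := Real.Gamma_pos_of_pos (by positivity)
  have : Real.Gamma s * (Nat.factorial k : ℝ)
      = Real.Gamma (s + k + 1) * ∫ x in (0:ℝ)..1, x ^ (s - 1) * (1 - x) ^ k := by
    exact_mod_cast hβ
  field_simp
  linarith [this]

/-- For all reals `a > 0` and `ψ ∈ (0,1]` and all natural numbers `k, j`:
`∫_0^1 (1-v)^k v^(a+1/ψ) (∫_0^v (1-u)^j u^a du) dv
   ≤ (1/(a+1)) · k! · Γ(2a+1/ψ+2)/Γ(2a+1/ψ+k+3)`. -/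
theorem joint_degree_double_integral_bound (a ψ : ℝ) (ha : 0 < a)
    (hψ : ψ ∈ Set.Ioc (0:ℝ) 1) (k j : ℕ) :
    ∫ v in Set.Ioc (0:ℝ) 1, (1 - v) ^ k * v ^ (a + 1/ψ) *
        ∫ u in Set.Ioc (0:ℝ) v, (1 - u) ^ j * u ^ a ≤
      (1 / (a + 1)) * (Nat.factorial k) *
        (Real.Gamma (2*a + 1/ψ + 2) / Real.Gamma (2*a + 1/ψ + k + 3)) := by
  obtain ⟨hψ0, hψ1⟩ := hψ
  set s : ℝ := 2*a + 1/ψ + 2 with hs_def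
  have hψinv : (0:ℝ) < 1/ψ := by positivity
  have hs1 : 0 < s - 1 := by simp only [hs_def]; linarith
  -- the dominating function
  set g : ℝ → ℝ := fun v => (1 / (a + 1)) * (v ^ (s - 1) * (1 - v) ^ k) with hg_def
  have hgcont : ContinuousOn (fun v : ℝ => v ^ (s - 1) * (1 - v) ^ k) (Icc 0 1) :=
    (ContinuousOn.rpow_const continuousOn_id fun x _ => Or.inr hs1.le).mul
      (Continuous.continuousOn (by continuity))
  have hgint : IntegrableOn g (Ioc 0 1) := by
    exact ((hgcont.integrableOn_Icc).mono_set Ioc_subset_Icc_self).const_mul _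
  -- pointwise bound
  have hpt : ∀ v ∈ Ioc (0:ℝ) 1,
      (1 - v) ^ k * v ^ (a + 1/ψ) * (∫ u in Ioc (0:ℝ) v, (1 - u) ^ j * u ^ a) ≤ g v := by
    intro v hv
    obtain ⟨hv0, hv1⟩ := hv
    have hinner_le : (∫ u in Ioc (0:ℝ) v, (1 - u) ^ j * u ^ a)
        ≤ ∫ u in Ioc (0:ℝ) v, u ^ a := by
      have hcont1 : ContinuousOn (fun u : ℝ => (1 - u) ^ j * u ^ a) (Icc 0 v) :=
        (Continuous.continuousOn (by continuity)).mul
          (ContinuousOn.rpow_const continuousOn_id fun x _ => Or.inr ha.le)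
      have hcont2 : ContinuousOn (fun u : ℝ => u ^ a) (Icc 0 v) :=
        ContinuousOn.rpow_const continuousOn_id fun x _ => Or.inr ha.le
      refine setIntegral_mono_on
        ((hcont1.integrableOn_Icc).mono_set Ioc_subset_Icc_self)
        ((hcont2.integrableOn_Icc).mono_set Ioc_subset_Icc_self)
        measurableSet_Ioc fun u hu => ?_
      have hu0 := hu.1
      have h1u : (1 - u) ^ j ≤ 1 := by
        apply pow_le_one₀ (by linarith [hu.2, hv1]) (by linarith [hu.1])
      calc (1 - u) ^ j * u ^ a ≤ 1 * u ^ a := by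
            apply mul_le_mul_of_nonneg_right h1u (Real.rpow_nonneg hu0.le a)
        _ = u ^ a := one_mul _
    have hval : (∫ u in Ioc (0:ℝ) v, u ^ a) = v ^ (a + 1) / (a + 1) := by
      rw [← intervalIntegral.integral_of_le hv0.le,
        integral_rpow (Or.inl (by linarith : (-1:ℝ) < a))]
      rw [Real.zero_rpow (by positivity : a + 1 ≠ 0)]
      ring
    have hnn : (0:ℝ) ≤ (1 - v) ^ k * v ^ (a + 1/ψ) := by
      have := Real.rpow_nonneg hv0.le (a + 1/ψ)
      have : (0:ℝ) ≤ (1 - v) ^ k := pow_nonneg (by linarith) k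
      positivity
    calc (1 - v) ^ k * v ^ (a + 1/ψ) * (∫ u in Ioc (0:ℝ) v, (1 - u) ^ j * u ^ a)
        ≤ (1 - v) ^ k * v ^ (a + 1/ψ) * (v ^ (a + 1) / (a + 1)) := by
          rw [← hval]; exact mul_le_mul_of_nonneg_left hinner_le hnn
      _ = g v := by
          have : v ^ (a + 1/ψ) * v ^ (a + 1) = v ^ (s - 1) := by
            rw [← Real.rpow_add hv0]
            congr 1
            simp only [hs_def]; ring
          simp only [hg_def]
          rw [← this]
          ring
  -- nonnegativity
  have hnonneg : ∀ v ∈ Ioc (0:ℝ) 1,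
      0 ≤ (1 - v) ^ k * v ^ (a + 1/ψ) * (∫ u in Ioc (0:ℝ) v, (1 - u) ^ j * u ^ a) := by
    intro v hv
    have h1 : (0:ℝ) ≤ (1 - v) ^ k := pow_nonneg (by linarith [hv.2]) k
    have h2 : (0:ℝ) ≤ v ^ (a + 1/ψ) := Real.rpow_nonneg hv.1.le _
    have h3 : 0 ≤ ∫ u in Ioc (0:ℝ) v, (1 - u) ^ j * u ^ a := by
      refine setIntegral_nonneg measurableSet_Ioc fun u hu => ?_
      have : (0:ℝ) ≤ (1 - u) ^ j := pow_nonneg (by linarith [hu.2, hv.2]) j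
      have := Real.rpow_nonneg hu.1.le a
      positivity
    positivity
  -- combine
  have hmono : (∫ v in Ioc (0:ℝ) 1, (1 - v) ^ k * v ^ (a + 1/ψ) *
        ∫ u in Ioc (0:ℝ) v, (1 - u) ^ j * u ^ a) ≤ ∫ v in Ioc (0:ℝ) 1, g v := by
    refine integral_mono_of_nonneg ?_ hgint ?_
    · filter_upwards [ae_restrict_mem measurableSet_Ioc] with v hv using hnonneg v hv
    · filter_upwards [ae_restrict_mem measurableSet_Ioc] with v hv using hpt v hv
  refine hmono.trans_eq ?_
  rw [integral_const_mul, ← intervalIntegral.integral_of_le (by norm_num : (0:ℝ) ≤ 1),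
    real_beta_eq s (by simp only [hs_def]; linarith) k]
  have : s + k + 1 = 2*a + 1/ψ + k + 3 := by simp only [hs_def]; ring
  rw [this]
  ring
end
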